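/- arXiv:1203.6399 — 7 statements merged into one kernel-verified Lean document; each statement's English description precedes it below -/
import Mathlib

section
/- For all integers k, m ≥ 1 and all x ∈ ℝ, one has Σ_{j=0}^{max(k,m)} [q·C(k,j) + (-1)^j·C(m,j)] · Ẽ_{k+m-j}(x) = [2]_q · x^k · (x-1)^m, where C(n,j) denotes the binomial coefficient (equal to 0 when j > n). -/
open Finset Polynomial

noncomputable def Mf (E : ℕ → ℝ) (p : Polynomial ℝ) : ℝ := p.sum fun n a => a * E n

lemma Mf_zero (E : ℕ → ℝ) : Mf E 0 = 0 := Polynomial.sum_zero_index _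

lemma Mf_add (E : ℕ → ℝ) (p r : Polynomial ℝ) : Mf E (p + r) = Mf E p + Mf E r :=
  Polynomial.sum_add_index p r _ (fun i => zero_mul _) (fun a b₁ b₂ => add_mul b₁ b₂ _)

lemma Mf_smul (E : ℕ → ℝ) (c : ℝ) (p : Polynomial ℝ) : Mf E (c • p) = c * Mf E p := by
  unfold Mf
  rw [Polynomial.sum_smul_index p c (fun n a => a * E n) (fun i => zero_mul _), Polynomial.sum,
    Polynomial.sum, Finset.mul_sum]
  exact Finset.sum_congr rfl fun n _ => by ring

lemma Mf_C_mul (E : ℕ → ℝ) (c : ℝ) (p : Polynomial ℝ) : Mf E (C c * p) = c * Mf E p := by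
  rw [← smul_eq_C_mul, Mf_smul]

lemma Mf_monomial (E : ℕ → ℝ) (n : ℕ) (a : ℝ) : Mf E (monomial n a) = a * E n :=
  Polynomial.sum_monomial_index a _ (zero_mul _)

lemma Mf_X_pow (E : ℕ → ℝ) (n : ℕ) : Mf E (X ^ n) = E n := by
  rw [X_pow_eq_monomial, Mf_monomial, one_mul]

lemma Mf_sum (E : ℕ → ℝ) {ι : Type*} (s : Finset ι) (g : ι → Polynomial ℝ) :
    Mf E (∑ i ∈ s, g i) = ∑ i ∈ s, Mf E (g i) := by
  classical
  induction s using Finset.induction_on with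
  | empty => simp [Mf_zero]
  | insert _ _ h ih => rw [Finset.sum_insert h, Finset.sum_insert h, Mf_add, ih]

lemma keyM (q : ℝ) (E : ℕ → ℝ) (hE0 : E 0 = 1)
    (hE : ∀ n : ℕ, 1 ≤ n →
      q * ∑ j ∈ range (n + 1), (n.choose j : ℝ) * E j + E n = 0)
    (p : Polynomial ℝ) :
    q * Mf E (p.comp (X + 1)) + Mf E p = (1 + q) * p.coeff 0 := by
  induction p using Polynomial.induction_on' with
  | add p r hp hr =>
    rw [add_comp, Mf_add, Mf_add, coeff_add]
    linear_combination hp + hr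
  | monomial n a =>
    have hcomp : (monomial n a).comp (X + 1) = C a * (X + 1) ^ n := monomial_comp n
    have hterm : ∀ i : ℕ, C a * (X ^ i * (1:Polynomial ℝ) ^ (n - i) * (n.choose i : Polynomial ℝ))
        = C (a * (n.choose i : ℝ)) * X ^ i := by
      intro i
      simp only [one_pow, ← C_eq_natCast, C_mul]
      ring
    have hM : Mf E ((monomial n a).comp (X + 1)) = ∑ i ∈ range (n + 1), a * (n.choose i : ℝ) * E i := by
      rw [hcomp, add_pow, Finset.mul_sum, Mf_sum]
      refine Finset.sum_congr rfl fun i _ => ?_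
      rw [hterm i, Mf_C_mul, Mf_X_pow]
    rw [hM, Mf_monomial, coeff_monomial]
    rcases Nat.eq_zero_or_pos n with h0 | hpos
    · subst h0; simp [hE0]; ring
    · have hn := hE n hpos
      have hne : ¬ (n = 0) := by omega
      rw [if_neg hne]
      have : ∑ i ∈ range (n + 1), a * (n.choose i : ℝ) * E i
          = a * ∑ i ∈ range (n + 1), (n.choose i : ℝ) * E i := by
        rw [Finset.mul_sum]; exact Finset.sum_congr rfl fun i _ => by ring
      rw [this]
      linear_combination a * hn


theorem stmt_0 (q : ℝ) (hq0 : q ≠ 0) (hq1 : q ≠ -1)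
    (E : ℕ → ℝ) (hE0 : E 0 = 1)
    (hE : ∀ n : ℕ, 1 ≤ n →
      q * ∑ j ∈ range (n + 1), (n.choose j : ℝ) * E j + E n = 0)
    (Ep : ℕ → ℝ → ℝ)
    (hEp : ∀ (n : ℕ) (x : ℝ),
      Ep n x = ∑ l ∈ range (n + 1), (n.choose l : ℝ) * E (n - l) * x ^ l)
    (k m : ℕ) (hk : 1 ≤ k) (hm : 1 ≤ m) (x : ℝ) :
    ∑ j ∈ range (max k m + 1),
      (q * (k.choose j : ℝ) + (-1 : ℝ) ^ j * (m.choose j : ℝ)) * Ep (k + m - j) x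
    = (1 + q) * x ^ k * (x - 1) ^ m := by
  set K := max k m with hK
  have hEpM : ∀ n : ℕ, Ep n x = Mf E ((X + C x) ^ n) := by
    intro n
    have h1 : Mf E ((X + C x) ^ n)
        = ∑ i ∈ range (n + 1), x ^ (n - i) * (n.choose i : ℝ) * E i := by
      rw [add_pow, Mf_sum]
      refine Finset.sum_congr rfl fun i _ => ?_
      have h2 : X ^ i * (C x) ^ (n - i) * ((n.choose i : ℕ) : Polynomial ℝ)
          = C (x ^ (n - i) * (n.choose i : ℝ)) * X ^ i := by
        simp only [← C_pow, ← C_eq_natCast, C_mul]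
        push_cast
        ring
      rw [h2, Mf_C_mul, Mf_X_pow]
    rw [h1, hEp,
      ← Finset.sum_range_reflect (fun l => (n.choose l : ℝ) * E (n - l) * x ^ l) (n + 1)]
    refine Finset.sum_congr rfl fun j hj => ?_
    have hj' : j ≤ n := by have := Finset.mem_range.mp hj; omega
    have h3 : n + 1 - 1 - j = n - j := by omega
    rw [h3, Nat.choose_symm hj', Nat.sub_sub_self hj']
    ring
  have claim1 : ∑ j ∈ range (K + 1), (k.choose j : ℝ) * Mf E ((X + C x) ^ (k + m - j))
      = Mf E ((X + C x + 1) ^ k * (X + C x) ^ m) := by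
    have hexp : (X + C x + 1) ^ k * (X + C x) ^ m
        = ∑ i ∈ range (k + 1), C ((k.choose i : ℝ)) * (X + C x) ^ (i + m) := by
      rw [add_pow, Finset.sum_mul]
      refine Finset.sum_congr rfl fun i _ => ?_
      rw [pow_add]
      simp only [one_pow, ← C_eq_natCast]
      ring
    have hsub : ∑ j ∈ range (K + 1), (k.choose j : ℝ) * Mf E ((X + C x) ^ (k + m - j))
        = ∑ j ∈ range (k + 1), (k.choose j : ℝ) * Mf E ((X + C x) ^ (k + m - j)) := by
      refine (Finset.sum_subset (Finset.range_subset_range.mpr (by omega : k + 1 ≤ K + 1))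
        (fun j _ hj => ?_)).symm
      have hjk : k < j := by
        rcases Finset.mem_range.not.mp hj with h; omega
      rw [Nat.choose_eq_zero_of_lt hjk]
      simp
    rw [hsub, hexp, Mf_sum]
    simp only [Mf_C_mul]
    rw [← Finset.sum_range_reflect
      (fun i => (k.choose i : ℝ) * Mf E ((X + C x) ^ (i + m))) (k + 1)]
    refine Finset.sum_congr rfl fun j hj => ?_
    have hj' : j ≤ k := by have := Finset.mem_range.mp hj; omega
    have h3 : k + 1 - 1 - j = k - j := by omega
    simp only [h3, Nat.choose_symm hj']
    have h4 : k + m - j = k - j + m := by omega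
    rw [h4]
  have claim2 : ∑ j ∈ range (K + 1),
        (-1 : ℝ) ^ j * (m.choose j : ℝ) * Mf E ((X + C x) ^ (k + m - j))
      = Mf E ((X + C x) ^ k * (X + C x - 1) ^ m) := by
    have hone : (X + C x - 1 : Polynomial ℝ) = (X + C x) + C (-1) := by
      rw [map_neg, map_one]; ring
    have hexp : (X + C x) ^ k * (X + C x - 1) ^ m
        = ∑ i ∈ range (m + 1),
            C ((-1 : ℝ) ^ (m - i) * (m.choose i : ℝ)) * (X + C x) ^ (i + k) := by
      rw [hone, add_pow (X + C x) (C (-1)) m, Finset.mul_sum]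
      refine Finset.sum_congr rfl fun i _ => ?_
      rw [pow_add]
      simp only [← C_pow, ← C_eq_natCast, C_mul]
      ring
    have hsub : ∑ j ∈ range (K + 1),
          (-1 : ℝ) ^ j * (m.choose j : ℝ) * Mf E ((X + C x) ^ (k + m - j))
        = ∑ j ∈ range (m + 1),
          (-1 : ℝ) ^ j * (m.choose j : ℝ) * Mf E ((X + C x) ^ (k + m - j)) := by
      refine (Finset.sum_subset (Finset.range_subset_range.mpr (by omega : m + 1 ≤ K + 1))
        (fun j _ hj => ?_)).symm
      have hjm : m < j := by
        rcases Finset.mem_range.not.mp hj with h; omega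
      rw [Nat.choose_eq_zero_of_lt hjm]
      simp
    rw [hsub, hexp, Mf_sum]
    simp only [Mf_C_mul]
    rw [← Finset.sum_range_reflect
      (fun i => (-1 : ℝ) ^ (m - i) * (m.choose i : ℝ) * Mf E ((X + C x) ^ (i + k))) (m + 1)]
    refine Finset.sum_congr rfl fun j hj => ?_
    have hj' : j ≤ m := by have := Finset.mem_range.mp hj; omega
    have h3 : m + 1 - 1 - j = m - j := by omega
    simp only [h3, Nat.choose_symm hj', Nat.sub_sub_self hj']
    have h4 : k + m - j = m - j + k := by omega
    rw [h4]
  have hsplit : ∑ j ∈ range (K + 1),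
        (q * (k.choose j : ℝ) + (-1 : ℝ) ^ j * (m.choose j : ℝ)) * Ep (k + m - j) x
      = q * ∑ j ∈ range (K + 1), (k.choose j : ℝ) * Mf E ((X + C x) ^ (k + m - j))
        + ∑ j ∈ range (K + 1),
            (-1 : ℝ) ^ j * (m.choose j : ℝ) * Mf E ((X + C x) ^ (k + m - j)) := by
    simp only [hEpM]
    rw [Finset.mul_sum, ← Finset.sum_add_distrib]
    exact Finset.sum_congr rfl fun j _ => by ring
  rw [hsplit, claim1, claim2]
  have hcomp : ((X + C x) ^ k * (X + C x - 1) ^ m).comp (X + 1)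
      = (X + C x + 1) ^ k * (X + C x) ^ m := by
    simp only [mul_comp, pow_comp, sub_comp, add_comp, X_comp, C_comp, one_comp]
    ring
  have hcoeff : ((X + C x) ^ k * (X + C x - 1) ^ m).coeff 0 = x ^ k * (x - 1) ^ m := by
    rw [coeff_zero_eq_eval_zero]
    simp
  have key := keyM q E hE0 hE ((X + C x) ^ k * (X + C x - 1) ^ m)
  rw [hcomp, hcoeff] at key
  linear_combination key
end

section
/- For all integers k, m ≥ 1, one has Σ_{j=1}^{max(k,m)} [q·C(k,j) + (-1)^j·C(m,j)] · Ẽ_{k+m-j+1}/(k+m-j+1) = q·(-1)^{m+1} / ((k+m+1)·C(k+m,k)) − [2]_q · Ẽ_{k+m+1}/(k+m+1), where C(n,j) denotes the binomial coefficient (equal to 0 when j > n). -/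
open Finset

-- alternating Vandermonde
lemma vander : ∀ (m k i : ℕ),
    ∑ j ∈ range (m+1), (-1:ℝ)^j * (m.choose j : ℝ) * ((k+m-j).choose i : ℝ) =
      if m ≤ i then ((k.choose (i-m) : ℕ) : ℝ) else 0 := by
  intro m
  induction m with
  | zero => intro k i; simp
  | succ m ih =>
    intro k i
    set t1 : ℕ → ℝ := fun j => (-1:ℝ)^j * (m.choose j : ℝ) * (((k+1)+m-j).choose i : ℝ) with ht1
    set t2 : ℕ → ℝ := fun j => (-1:ℝ)^j * (m.choose j : ℝ) * ((k+m-j).choose i : ℝ) with ht2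
    have h1 : ∑ j ∈ range (m+2), (-1:ℝ)^j * ((m+1).choose j : ℝ) * ((k+(m+1)-j).choose i : ℝ)
        = (∑ j ∈ range (m+1), t1 j) - ∑ j ∈ range (m+1), t2 j := by
      calc ∑ j ∈ range (m+2), (-1:ℝ)^j * ((m+1).choose j : ℝ) * ((k+(m+1)-j).choose i : ℝ)
          = (∑ j ∈ range (m+1), (t1 (j+1) - t2 j))
            + (-1:ℝ)^0 * ((m+1).choose 0 : ℝ) * ((k+(m+1)-0).choose i : ℝ) := by
            rw [Finset.sum_range_succ']
            congr 1
            apply Finset.sum_congr rfl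
            intro j hj
            have hje : k + (m+1) - (j+1) = k + m - j := by omega
            have hje2 : (k+1) + m - (j+1) = k + m - j := by omega
            rw [Nat.choose_succ_succ m j]
            simp only [ht1, ht2, hje, hje2]
            push_cast
            ring
        _ = ((∑ j ∈ range (m+1), t1 (j+1)) + t1 0) - ∑ j ∈ range (m+1), t2 j := by
            rw [Finset.sum_sub_distrib]
            have : (-1:ℝ)^0 * ((m+1).choose 0 : ℝ) * ((k+(m+1)-0).choose i : ℝ) = t1 0 := by
              simp only [ht1]
              norm_num
              congr 1
              omega
            rw [this]; ring
        _ = (∑ j ∈ range (m+2), t1 j) - ∑ j ∈ range (m+1), t2 j := by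
            rw [Finset.sum_range_succ' t1 (m+1)]
        _ = (∑ j ∈ range (m+1), t1 j) - ∑ j ∈ range (m+1), t2 j := by
            rw [Finset.sum_range_succ t1 (m+1)]
            simp [ht1]
    rw [h1, ht1, ht2, ih (k+1) i, ih k i]
    by_cases h : m + 1 ≤ i
    · have h' : m ≤ i := by omega
      rw [if_pos h, if_pos h', if_pos h']
      have : i - m = (i - (m+1)) + 1 := by omega
      rw [this, Nat.choose_succ_succ]
      push_cast; ring
    · by_cases h' : m ≤ i
      · have : i = m := by omega
        rw [if_neg h, if_pos h', if_pos h', this]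
        simp
      · rw [if_neg h, if_neg h', if_neg h']; ring

-- beta integral identity
lemma betaid : ∀ (m k : ℕ),
    ∑ j ∈ range (m+1), (-1:ℝ)^j * (m.choose j : ℝ) / ((k+m+1-j : ℕ) : ℝ)
      = (-1:ℝ)^m * (m.factorial : ℝ) * (k.factorial : ℝ) / ((k+m+1).factorial : ℝ) := by
  intro m
  induction m with
  | zero =>
    intro k
    have h : ((k.factorial : ℕ) : ℝ) ≠ 0 := by exact_mod_cast (Nat.factorial_pos k).ne'
    simp [Nat.factorial_succ]
    rw [eq_comm]
    field_simp
  | succ m ih =>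
    intro k
    set t1 : ℕ → ℝ := fun j => (-1:ℝ)^j * (m.choose j : ℝ) / (((k+1)+m+1-j : ℕ) : ℝ) with ht1
    set t2 : ℕ → ℝ := fun j => (-1:ℝ)^j * (m.choose j : ℝ) / ((k+m+1-j : ℕ) : ℝ) with ht2
    have h1 : ∑ j ∈ range (m+2), (-1:ℝ)^j * ((m+1).choose j : ℝ) / ((k+(m+1)+1-j : ℕ) : ℝ)
        = (∑ j ∈ range (m+1), t1 j) - ∑ j ∈ range (m+1), t2 j := by
      calc ∑ j ∈ range (m+2), (-1:ℝ)^j * ((m+1).choose j : ℝ) / ((k+(m+1)+1-j : ℕ) : ℝ)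
          = (∑ j ∈ range (m+1), (t1 (j+1) - t2 j))
            + (-1:ℝ)^0 * ((m+1).choose 0 : ℝ) / ((k+(m+1)+1-0 : ℕ) : ℝ) := by
            rw [Finset.sum_range_succ']
            congr 1
            apply Finset.sum_congr rfl
            intro j hj
            have hje : k + (m+1) + 1 - (j+1) = k + m + 1 - j := by omega
            have hje2 : (k+1) + m + 1 - (j+1) = k + m + 1 - j := by omega
            rw [Nat.choose_succ_succ m j]
            simp only [ht1, ht2, hje, hje2]
            push_cast
            ring
        _ = ((∑ j ∈ range (m+1), t1 (j+1)) + t1 0) - ∑ j ∈ range (m+1), t2 j := by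
            rw [Finset.sum_sub_distrib]
            have : (-1:ℝ)^0 * ((m+1).choose 0 : ℝ) / ((k+(m+1)+1-0 : ℕ) : ℝ) = t1 0 := by
              simp only [ht1]
              norm_num
              ring
            rw [this]; ring
        _ = (∑ j ∈ range (m+2), t1 j) - ∑ j ∈ range (m+1), t2 j := by
            rw [Finset.sum_range_succ' t1 (m+1)]
        _ = (∑ j ∈ range (m+1), t1 j) - ∑ j ∈ range (m+1), t2 j := by
            rw [Finset.sum_range_succ t1 (m+1)]
            simp [ht1]
    rw [h1, ht1, ht2, ih (k+1), ih k]
    have hfp : ((k + (m+1) + 1).factorial : ℝ) ≠ 0 := by exact_mod_cast (Nat.factorial_pos _).ne'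
    have hfp2 : ((k + m + 1).factorial : ℝ) ≠ 0 := by exact_mod_cast (Nat.factorial_pos _).ne'
    have e1 : (k+1) + m + 1 = k + (m+1) + 1 := by ring
    rw [e1]
    have hfs : ((k + (m+1) + 1).factorial : ℝ) = ((k+m+2 : ℕ) : ℝ) * ((k+m+1).factorial : ℝ) := by
      have : k + (m+1) + 1 = (k + m + 1) + 1 := by ring
      rw [this, Nat.factorial_succ]
      push_cast; ring
    have hks : ((k+1).factorial : ℝ) = ((k+1 : ℕ) : ℝ) * (k.factorial : ℝ) := by
      rw [Nat.factorial_succ]; push_cast; ring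
    have hms : ((m+1).factorial : ℝ) = ((m+1 : ℕ) : ℝ) * (m.factorial : ℝ) := by
      rw [Nat.factorial_succ]; push_cast; ring
    rw [hfs, hks, hms]
    have hkm2 : ((k+m+2 : ℕ) : ℝ) ≠ 0 := by positivity
    field_simp
    push_cast
    ring


noncomputable def Wf (E : ℕ → ℝ) (n : ℕ) : ℝ :=
  ∑ t ∈ range (n+1), (n.choose t : ℝ) * E (n-t) / ((t:ℝ)+1)

lemma key1 (q : ℝ) (E : ℕ → ℝ) (hE0 : E 0 = 1)
    (hE : ∀ n : ℕ, 1 ≤ n →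
      q * ∑ j ∈ range (n + 1), (n.choose j : ℝ) * E j + E n = 0) (n : ℕ) :
    q * (∑ i ∈ range (n+1), (n.choose i : ℝ) * Wf E i) + Wf E n
      = (1+q)/((n:ℝ)+1) := by
  have step1 : ∀ i ∈ range (n+1), (n.choose i : ℝ) * Wf E i
      = ∑ t ∈ range (n+1), (n.choose i : ℝ) * (i.choose t : ℝ) * E (i-t) / ((t:ℝ)+1) := by
    intro i hi
    rw [Wf, Finset.mul_sum]
    have hsub : range (i+1) ⊆ range (n+1) := by
      apply Finset.range_subset_range.2
      have := Finset.mem_range.1 hi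
      omega
    rw [Finset.sum_subset hsub]
    · apply Finset.sum_congr rfl
      intro t _
      ring
    · intro t _ htn
      have : i.choose t = 0 := Nat.choose_eq_zero_of_lt (by
        simpa using Finset.mem_range.not.1 htn |> fun h => by omega)
      simp [this]
  have step3 : ∀ t ∈ range (n+1),
      ∑ i ∈ range (n+1), (n.choose i : ℝ) * (i.choose t : ℝ) * E (i-t)
        = (n.choose t : ℝ) * ∑ s ∈ range (n-t+1), ((n-t).choose s : ℝ) * E s := by
    intro t ht
    have htn : t ≤ n := by have := Finset.mem_range.1 ht; omega
    have hsub : Ico t (n+1) ⊆ range (n+1) := by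
      rw [Finset.range_eq_Ico]
      exact Finset.Ico_subset_Ico (Nat.zero_le t) le_rfl
    rw [← Finset.sum_subset hsub]
    · rw [Finset.sum_Ico_eq_sum_range]
      have hlen : n + 1 - t = (n - t) + 1 := by omega
      rw [hlen, Finset.mul_sum]
      apply Finset.sum_congr rfl
      intro s hs
      have hs' : s ≤ n - t := by have := Finset.mem_range.1 hs; omega
      have h1 : t + s ≤ n := by omega
      have h2 : t ≤ t + s := by omega
      have hcc : n.choose (t+s) * (t+s).choose t = n.choose t * (n-t).choose s := by
        have := Nat.choose_mul (n := n) h2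
        simpa using this
      have hts : t + s - t = s := by omega
      rw [hts]
      have : (n.choose (t+s) : ℝ) * ((t+s).choose t : ℝ) = (n.choose t : ℝ) * ((n-t).choose s : ℝ) := by
        exact_mod_cast congrArg (Nat.cast : ℕ → ℝ) hcc
      rw [this]
      ring
    · intro i _ hit
      have : i < t := by
        rcases Finset.mem_Ico.not.1 hit with h
        have := Finset.mem_range.1 ‹i ∈ range (n+1)›
        omega
      have : i.choose t = 0 := Nat.choose_eq_zero_of_lt this
      simp [this]
  have hV : q * (∑ i ∈ range (n+1), (n.choose i : ℝ) * Wf E i) + Wf E n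
      = ∑ t ∈ range (n+1),
          (n.choose t : ℝ) * (q * (∑ s ∈ range (n-t+1), ((n-t).choose s : ℝ) * E s) + E (n-t))
          / ((t:ℝ)+1) := by
    rw [Finset.sum_congr rfl step1, Finset.sum_comm, Wf, Finset.mul_sum, ← Finset.sum_add_distrib]
    apply Finset.sum_congr rfl
    intro t ht
    rw [← Finset.sum_div, step3 t ht]
    ring
  rw [hV]
  rw [Finset.sum_eq_single_of_mem n (Finset.self_mem_range_succ n)]
  · simp [hE0]; ring
  · intro t ht htn
    have h1 : 1 ≤ n - t := by
      have := Finset.mem_range.1 ht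
      omega
    have h0 := hE (n-t) h1
    rw [h0]
    simp

lemma key2 (q : ℝ) (E : ℕ → ℝ)
    (hE : ∀ n : ℕ, 1 ≤ n →
      q * ∑ j ∈ range (n + 1), (n.choose j : ℝ) * E j + E n = 0) (n : ℕ) :
    (1+q) * E (n+1) = -q * (((n:ℝ)+1) * Wf E n) := by
  have h0 := hE (n+1) (by omega)
  rw [Finset.sum_range_succ] at h0
  have hW : ∑ j ∈ range (n+1), ((n+1).choose j : ℝ) * E j = ((n:ℝ)+1) * Wf E n := by
    rw [Wf, ← Finset.sum_range_reflect (fun t => (n.choose t : ℝ) * E (n-t) / ((t:ℝ)+1)) (n+1),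
      Finset.mul_sum]
    apply Finset.sum_congr rfl
    intro j hj
    have hjn : j ≤ n := by have := Finset.mem_range.1 hj; omega
    simp only [Nat.add_sub_cancel]
    have e1 : n - (n - j) = j := by omega
    have e2 : n.choose (n - j) = n.choose j := Nat.choose_symm hjn
    rw [e1, e2]
    -- goal: ↑((n+1).choose j) * E j = (↑n+1) * (↑(n.choose j) * E j / (↑(n-j)+1))
    have hnat : (n+1) * n.choose j = (n+1).choose j * (n+1-j) := by
      have h1 := Nat.add_one_mul_choose_eq n (n - j)
      have e3 : n - (n - j) = j := by omega
      have e4 : n.choose (n - j) = n.choose j := Nat.choose_symm hjn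
      have e5 : (n+1).choose (n - j + 1) = (n+1).choose j := by
        have : n - j + 1 = (n+1) - j := by omega
        rw [this]
        exact Nat.choose_symm (by omega)
      rw [e4, e5] at h1
      have e6 : n - j + 1 = n + 1 - j := by omega
      rw [← e6]
      exact_mod_cast h1
    have hnatR : ((n:ℝ)+1) * (n.choose j : ℝ) = ((n+1).choose j : ℝ) * ((n-j : ℕ) + 1 : ℝ) := by
      have := congrArg (Nat.cast : ℕ → ℝ) hnat
      push_cast at this
      have e7 : ((n + 1 - j : ℕ) : ℝ) = ((n - j : ℕ) : ℝ) + 1 := by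
        have : n + 1 - j = (n - j) + 1 := by omega
        rw [this]; push_cast; ring
      rw [e7] at this
      push_cast
      linarith [this]
    have hden : ((n-j : ℕ) : ℝ) + 1 ≠ 0 := by positivity
    rw [eq_comm]
    calc ((n:ℝ)+1) * ((n.choose j : ℝ) * E j / (((n-j : ℕ) : ℝ)+1))
        = (((n:ℝ)+1) * (n.choose j : ℝ)) * (E j / (((n-j : ℕ) : ℝ)+1)) := by ring
      _ = (((n+1).choose j : ℝ) * (((n-j : ℕ) : ℝ)+1)) * (E j / (((n-j : ℕ) : ℝ)+1)) := by
          rw [hnatR]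
      _ = ((n+1).choose j : ℝ) * E j := by
          rw [mul_assoc, mul_comm (((n-j : ℕ) : ℝ)+1), div_mul_cancel₀ _ hden]
  rw [hW, Nat.choose_self] at h0
  push_cast at h0
  linarith [h0]

lemma stepA (E : ℕ → ℝ) (k m : ℕ) :
    ∑ j ∈ range (k+m+1), (k.choose j : ℝ) * Wf E (k+m-j)
      = ∑ j ∈ range (m+1), (-1:ℝ)^j * (m.choose j : ℝ) *
          ∑ i ∈ range ((k+m-j)+1), ((k+m-j).choose i : ℝ) * Wf E i := by
  have lhs_eq : ∑ j ∈ range (k+m+1), (k.choose j : ℝ) * Wf E (k+m-j)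
      = ∑ s ∈ range (k+1), (k.choose s : ℝ) * Wf E (m+s) := by
    rw [← Finset.sum_subset (Finset.range_subset_range.2 (by omega : k+1 ≤ k+m+1))]
    · rw [← Finset.sum_range_reflect (fun j => (k.choose j : ℝ) * Wf E (k+m-j)) (k+1)]
      apply Finset.sum_congr rfl
      intro s hs
      have hsk : s ≤ k := by have := Finset.mem_range.1 hs; omega
      simp only [Nat.add_sub_cancel]
      have e1 : k.choose (k - s) = k.choose s := Nat.choose_symm hsk
      have e2 : k + m - (k - s) = m + s := by omega
      rw [e1, e2]
    · intro j _ hj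
      have : k < j := by
        have := Finset.mem_range.not.1 hj
        omega
      simp [Nat.choose_eq_zero_of_lt this]
  have rhs_eq : ∑ j ∈ range (m+1), (-1:ℝ)^j * (m.choose j : ℝ) *
          ∑ i ∈ range ((k+m-j)+1), ((k+m-j).choose i : ℝ) * Wf E i
      = ∑ s ∈ range (k+1), (k.choose s : ℝ) * Wf E (m+s) := by
    have ext : ∀ j ∈ range (m+1),
        (-1:ℝ)^j * (m.choose j : ℝ) *
          ∑ i ∈ range ((k+m-j)+1), ((k+m-j).choose i : ℝ) * Wf E i
        = ∑ i ∈ range (k+m+1), (-1:ℝ)^j * (m.choose j : ℝ) * ((k+m-j).choose i : ℝ) * Wf E i := by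
      intro j hj
      have hjm : j ≤ m := by have := Finset.mem_range.1 hj; omega
      rw [Finset.mul_sum]
      rw [Finset.sum_subset (Finset.range_subset_range.2 (by omega : (k+m-j)+1 ≤ k+m+1))]
      · apply Finset.sum_congr rfl
        intro i _
        ring
      · intro i _ hi
        have : k+m-j < i := by
          have := Finset.mem_range.not.1 hi
          omega
        simp [Nat.choose_eq_zero_of_lt this]
    rw [Finset.sum_congr rfl ext, Finset.sum_comm]
    have inner : ∀ i ∈ range (k+m+1),
        ∑ j ∈ range (m+1), (-1:ℝ)^j * (m.choose j : ℝ) * ((k+m-j).choose i : ℝ) * Wf E i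
        = (if m ≤ i then ((k.choose (i-m) : ℕ) : ℝ) else 0) * Wf E i := by
      intro i _
      rw [← Finset.sum_mul, vander m k i]
    rw [Finset.sum_congr rfl inner]
    rw [← Finset.sum_subset
      (by rw [Finset.range_eq_Ico]; exact Finset.Ico_subset_Ico (Nat.zero_le m) le_rfl :
        Ico m (k+m+1) ⊆ range (k+m+1))]
    · rw [Finset.sum_Ico_eq_sum_range]
      have : k + m + 1 - m = k + 1 := by omega
      rw [this]
      apply Finset.sum_congr rfl
      intro s _
      have h1 : m ≤ m + s := by omega
      rw [if_pos h1]
      have : m + s - m = s := by omega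
      rw [this, add_comm m s]
    · intro i _ hi
      have : i < m := by
        rcases Finset.mem_Ico.not.1 hi with h
        have := Finset.mem_range.1 ‹i ∈ range (k+m+1)›
        omega
      rw [if_neg (by omega)]
      ring
  rw [lhs_eq, rhs_eq]

lemma key3 (q : ℝ) (E : ℕ → ℝ) (hE0 : E 0 = 1)
    (hE : ∀ n : ℕ, 1 ≤ n →
      q * ∑ j ∈ range (n + 1), (n.choose j : ℝ) * E j + E n = 0) (k m : ℕ) :
    ∑ j ∈ range (k+m+1), (q * (k.choose j : ℝ) + (-1:ℝ)^j * (m.choose j : ℝ)) * Wf E (k+m-j)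
      = (1+q) * ((-1:ℝ)^m * (m.factorial : ℝ) * (k.factorial : ℝ) / ((k+m+1).factorial : ℝ)) := by
  have split : ∑ j ∈ range (k+m+1), (q * (k.choose j : ℝ) + (-1:ℝ)^j * (m.choose j : ℝ)) * Wf E (k+m-j)
      = q * (∑ j ∈ range (k+m+1), (k.choose j : ℝ) * Wf E (k+m-j))
        + ∑ j ∈ range (k+m+1), (-1:ℝ)^j * (m.choose j : ℝ) * Wf E (k+m-j) := by
    rw [Finset.mul_sum, ← Finset.sum_add_distrib]
    apply Finset.sum_congr rfl
    intro j _
    ring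
  have second : ∑ j ∈ range (k+m+1), (-1:ℝ)^j * (m.choose j : ℝ) * Wf E (k+m-j)
      = ∑ j ∈ range (m+1), (-1:ℝ)^j * (m.choose j : ℝ) * Wf E (k+m-j) := by
    rw [← Finset.sum_subset (Finset.range_subset_range.2 (by omega : m+1 ≤ k+m+1))]
    intro j _ hj
    have : m < j := by
      have := Finset.mem_range.not.1 hj
      omega
    simp [Nat.choose_eq_zero_of_lt this]
  rw [split, stepA E k m, second]
  have comb : q * (∑ j ∈ range (m+1), (-1:ℝ)^j * (m.choose j : ℝ) *
          ∑ i ∈ range ((k+m-j)+1), ((k+m-j).choose i : ℝ) * Wf E i)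
        + ∑ j ∈ range (m+1), (-1:ℝ)^j * (m.choose j : ℝ) * Wf E (k+m-j)
      = ∑ j ∈ range (m+1), (-1:ℝ)^j * (m.choose j : ℝ) *
          ((1+q) / (((k+m-j : ℕ) : ℝ) + 1)) := by
    rw [Finset.mul_sum, ← Finset.sum_add_distrib]
    apply Finset.sum_congr rfl
    intro j _
    rw [← key1 q E hE0 hE (k+m-j)]
    ring
  rw [comb]
  have cast1 : ∀ j ∈ range (m+1), (-1:ℝ)^j * (m.choose j : ℝ) *
        ((1+q) / (((k+m-j : ℕ) : ℝ) + 1))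
      = (1+q) * ((-1:ℝ)^j * (m.choose j : ℝ) / ((k+m+1-j : ℕ) : ℝ)) := by
    intro j hj
    have hjm : j ≤ m := by have := Finset.mem_range.1 hj; omega
    have : ((k+m+1-j : ℕ) : ℝ) = ((k+m-j : ℕ) : ℝ) + 1 := by
      have h : k+m+1-j = (k+m-j)+1 := by omega
      rw [h]; push_cast; ring
    rw [this]
    ring
  rw [Finset.sum_congr rfl cast1, ← Finset.mul_sum, betaid m k]

theorem stmt_1 (q : ℝ) (hq0 : q ≠ 0) (hq1 : q ≠ -1)
    (E : ℕ → ℝ) (hE0 : E 0 = 1)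
    (hE : ∀ n : ℕ, 1 ≤ n →
      q * ∑ j ∈ range (n + 1), (n.choose j : ℝ) * E j + E n = 0)
    (k m : ℕ) (hk : 1 ≤ k) (hm : 1 ≤ m) :
    ∑ j ∈ Icc 1 (max k m),
      (q * (k.choose j : ℝ) + (-1 : ℝ) ^ j * (m.choose j : ℝ)) *
        (E (k + m - j + 1) / (k + m - j + 1 : ℝ))
    = q * (-1 : ℝ) ^ (m + 1) / (((k + m + 1 : ℕ) : ℝ) * ((k + m).choose k : ℝ))
      - (1 + q) * (E (k + m + 1) / ((k + m + 1 : ℕ) : ℝ)) := by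
  have hq2 : (1:ℝ) + q ≠ 0 := by
    intro h
    apply hq1
    linarith
  set F : ℕ → ℝ := fun j =>
    (q * (k.choose j : ℝ) + (-1 : ℝ) ^ j * (m.choose j : ℝ)) *
      (E (k + m - j + 1) / ((k:ℝ) + (m:ℝ) - (j:ℝ) + 1)) with hF
  -- Step 1: extend to Icc 1 (k+m)
  have h1 : ∑ j ∈ Icc 1 (max k m), F j = ∑ j ∈ Icc 1 (k+m), F j := by
    apply Finset.sum_subset (Finset.Icc_subset_Icc_right (by omega : max k m ≤ k+m))
    intro j hj hnj
    have hjkm : j ≤ k + m := (Finset.mem_Icc.1 hj).2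
    have hmax : max k m < j := by
      rcases Finset.mem_Icc.not.1 hnj with h
      have := (Finset.mem_Icc.1 hj).1
      omega
    have hk0 : k.choose j = 0 := Nat.choose_eq_zero_of_lt (by omega)
    have hm0 : m.choose j = 0 := Nat.choose_eq_zero_of_lt (by omega)
    simp [hF, hk0, hm0]
  -- Step 2: full sum over range (k+m+1)
  have h2 : ∑ j ∈ range (k+m+1), F j = F 0 + ∑ j ∈ Icc 1 (k+m), F j := by
    rw [Finset.sum_range_succ' F (k+m)]
    rw [← Finset.Ico_add_one_right_eq_Icc, Finset.sum_Ico_eq_sum_range]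
    have : k + m + 1 - 1 = k + m := by omega
    rw [this]
    have : ∀ i ∈ range (k+m), F (1+i) = F (i+1) := by
      intro i _
      rw [add_comm]
    rw [Finset.sum_congr rfl this]
    ring
  -- Step 3: evaluate full sum via key2 / key3
  have h3 : ∑ j ∈ range (k+m+1), F j
      = -(q/(1+q)) * ((1+q) * ((-1:ℝ)^m * (m.factorial : ℝ) * (k.factorial : ℝ)
          / ((k+m+1).factorial : ℝ))) := by
    rw [← key3 q E hE0 hE k m, Finset.mul_sum]
    apply Finset.sum_congr rfl
    intro j hj
    have hjkm : j ≤ k + m := by have := Finset.mem_range.1 hj; omega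
    have hden : ((k:ℝ) + (m:ℝ) - (j:ℝ) + 1) = ((k+m-j : ℕ) : ℝ) + 1 := by
      have h : ((k+m-j : ℕ) : ℝ) = (k:ℝ) + m - j := by
        have : (j:ℝ) ≤ (k:ℝ) + m := by exact_mod_cast (by omega : j ≤ k + m)
        rw [Nat.cast_sub (by omega : j ≤ k + m)]
        push_cast
        ring
      rw [h]
    have hne : ((k+m-j : ℕ) : ℝ) + 1 ≠ 0 := by positivity
    have hk2 := key2 q E hE (k+m-j)
    have hEval : E (k + m - j + 1) = -(q/(1+q)) * ((((k+m-j : ℕ) : ℝ) + 1) * Wf E (k+m-j)) := by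
      have h' : E (k + m - j + 1) = (-q * ((((k+m-j : ℕ) : ℝ) + 1) * Wf E (k+m-j))) / (1+q) := by
        rw [← hk2, mul_div_cancel_left₀ _ hq2]
      rw [h']
      ring
    have hdiv : E (k + m - j + 1) / ((((k+m-j : ℕ) : ℝ)) + 1) = -(q/(1+q)) * Wf E (k+m-j) := by
      rw [hEval, mul_div_assoc, mul_div_cancel_left₀ _ hne]
    simp only [hF, hden, hdiv]
    ring
  -- Step 4: conclude
  have hF0 : F 0 = (q + 1) * (E (k + m + 1) / ((k + m + 1 : ℕ) : ℝ)) := by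
    simp only [hF, Nat.choose_zero_right, pow_zero, Nat.cast_one, Nat.cast_zero, Nat.sub_zero]
    push_cast
    ring
  have hcomb : ((k+m).choose k : ℝ) * (k.factorial : ℝ) * (m.factorial : ℝ)
      = ((k+m).factorial : ℝ) := by
    have h := Nat.choose_mul_factorial_mul_factorial (Nat.le_add_right k m)
    have e : k + m - k = m := by omega
    rw [e] at h
    exact_mod_cast h
  have hfs : ((k+m+1).factorial : ℝ) = ((k+m+1 : ℕ) : ℝ) * ((k+m).factorial : ℝ) := by
    rw [Nat.factorial_succ]
    push_cast
    ring
  have hchoosene : ((k+m).choose k : ℝ) ≠ 0 := by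
    have := Nat.choose_pos (Nat.le_add_right k m)
    positivity
  have hkm1ne : ((k+m+1 : ℕ) : ℝ) ≠ 0 := by positivity
  have hfacne : ((k+m).factorial : ℝ) ≠ 0 := by
    have := Nat.factorial_pos (k+m)
    positivity
  have hmfacne : ((m.factorial) : ℝ) ≠ 0 := by
    have := Nat.factorial_pos m
    positivity
  have hkfacne : ((k.factorial) : ℝ) ≠ 0 := by
    have := Nat.factorial_pos k
    positivity
  have key : -(q/(1+q)) * ((1+q) * ((-1:ℝ)^m * (m.factorial : ℝ) * (k.factorial : ℝ)
          / ((k+m+1).factorial : ℝ)))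
      = q * (-1 : ℝ) ^ (m + 1) / (((k + m + 1 : ℕ) : ℝ) * ((k + m).choose k : ℝ)) := by
    rw [hfs, ← hcomb]
    field_simp
    ring
  have := h2
  rw [h3, hF0] at this
  rw [h1]
  rw [key] at this
  linarith [this]
end

section
/- For every integer k ≥ 1, one has Σ_{j=1}^{k+1} [q·C(k,j) + (-1)^j·C(k+1,j)] · Ẽ_{2k+2-j}/(2k+2-j) = q·(-1)^k / ((2k+2)·C(2k+1,k)) − [2]_q · Ẽ_{2k+2}/(2k+2), where C(n,j) denotes the binomial coefficient (equal to 0 when j > n). -/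
open Finset Nat Polynomial

lemma beta_sum (n : ℕ) : ∀ m : ℕ,
    ∑ i ∈ range (n + 1), (-1 : ℝ) ^ i * (n.choose i : ℝ) / ((m : ℝ) + 1 + i)
      = (n ! : ℝ) * (m ! : ℝ) / ((m + n + 1)! : ℝ) := by
  induction n with
  | zero =>
    intro m
    rw [Finset.sum_range_one]
    norm_num
    rw [Nat.factorial_succ]
    push_cast
    field_simp
  | succ n ih =>
    intro m
    have key : ∑ i ∈ range (n + 2), (-1 : ℝ) ^ i * ((n+1).choose i : ℝ) / ((m : ℝ) + 1 + i)
        = (∑ i ∈ range (n + 1), (-1 : ℝ) ^ i * (n.choose i : ℝ) / ((m : ℝ) + 1 + i))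
          - ∑ i ∈ range (n + 1), (-1 : ℝ) ^ i * (n.choose i : ℝ) / (((m+1 : ℕ) : ℝ) + 1 + i) := by
      rw [Finset.sum_range_succ' (fun i => (-1 : ℝ) ^ i * ((n+1).choose i : ℝ) / ((m : ℝ) + 1 + i)) (n+1)]
      have expand : ∀ i ∈ range (n + 1),
          (-1 : ℝ) ^ (i+1) * ((n+1).choose (i+1) : ℝ) / ((m : ℝ) + 1 + ((i+1 : ℕ) : ℝ))
          = -((-1 : ℝ) ^ i * (n.choose i : ℝ) / (((m+1 : ℕ) : ℝ) + 1 + i))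
            + (-((-1 : ℝ) ^ i * (n.choose (i+1) : ℝ) / ((m : ℝ) + 1 + ((i+1 : ℕ) : ℝ)))) := by
        intro i _
        rw [Nat.choose_succ_succ]
        push_cast
        ring
      rw [Finset.sum_congr rfl expand, Finset.sum_add_distrib]
      have h2 : ∑ i ∈ range (n + 1), (-((-1 : ℝ) ^ i * (n.choose (i+1) : ℝ) / ((m : ℝ) + 1 + ((i+1 : ℕ) : ℝ))))
          = (∑ i ∈ range (n + 2), (-1 : ℝ) ^ i * (n.choose i : ℝ) / ((m : ℝ) + 1 + i))
              - (-1:ℝ)^0 * (n.choose 0 : ℝ) / ((m : ℝ) + 1 + ((0:ℕ) : ℝ)) := by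
        rw [Finset.sum_range_succ' (fun i => (-1 : ℝ) ^ i * (n.choose i : ℝ) / ((m : ℝ) + 1 + i)) (n+1)]
        rw [add_sub_cancel_right]
        apply Finset.sum_congr rfl
        intro i _
        push_cast
        ring
      rw [h2, Finset.sum_range_succ (fun i => (-1 : ℝ) ^ i * (n.choose i : ℝ) / ((m : ℝ) + 1 + i)) (n+1)]
      simp only [Nat.choose_succ_self, Nat.cast_zero, Nat.choose_zero_right,
        Nat.cast_one, pow_zero, one_mul]
      push_cast
      rw [Finset.sum_neg_distrib]
      ring
    rw [key, ih m, ih (m+1)]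
    have hm1 : ((m+1) + n + 1)! = (((m + (n+1) + 1))!) := by ring_nf
    rw [hm1, show (m + (n+1) + 1) = (m + n + 1) + 1 by ring]
    rw [Nat.factorial_succ (m+n+1), Nat.factorial_succ m, Nat.factorial_succ n]
    have h1 : ((m+n+1)! : ℝ) ≠ 0 := by positivity
    have h2 : ((m:ℝ) + n + 1) ≠ 0 := by positivity
    field_simp
    push_cast
    ring

lemma add_one_pow_expand (n : ℕ) : ((X : ℝ[X]) + 1) ^ n
    = ∑ i ∈ range (n + 1), C ((n.choose i : ℝ)) * X ^ i := by
  rw [add_pow]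
  apply Finset.sum_congr rfl
  intro i _
  have h1 : ((n.choose i : ℕ) : ℝ[X]) = C ((n.choose i : ℝ)) := by simp
  rw [one_pow, h1]
  ring

lemma sub_one_pow_expand (n : ℕ) : ((X : ℝ[X]) - 1) ^ n
    = ∑ i ∈ range (n + 1), C ((-1 : ℝ) ^ (n - i) * (n.choose i : ℝ)) * X ^ i := by
  rw [sub_eq_add_neg, add_pow]
  apply Finset.sum_congr rfl
  intro i _
  have h1 : ((n.choose i : ℕ) : ℝ[X]) = C ((n.choose i : ℝ)) := by simp
  have h2 : ((-1 : ℝ[X])) ^ (n - i) = C ((-1 : ℝ) ^ (n - i)) := by simp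
  rw [h1, h2, C_mul]
  ring

noncomputable def Qp (k : ℕ) : ℝ[X] :=
  ∑ i ∈ range (k + 2),
    C ((-1 : ℝ) ^ (k + 1 - i) * (((k+1).choose i : ℕ) : ℝ) / ((k + 1 + i : ℕ) : ℝ)) * X ^ (k + 1 + i)

lemma derivQ (k : ℕ) : derivative (Qp k) = X ^ k * ((X : ℝ[X]) - 1) ^ (k + 1) := by
  rw [Qp, map_sum, sub_one_pow_expand, Finset.mul_sum]
  apply Finset.sum_congr rfl
  intro i hi
  rw [derivative_C_mul_X_pow]
  have hne : ((k + 1 + i : ℕ) : ℝ) ≠ 0 := by positivity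
  have h1 : (-1 : ℝ) ^ (k + 1 - i) * (((k+1).choose i : ℕ) : ℝ) / ((k + 1 + i : ℕ) : ℝ) * ((k + 1 + i : ℕ) : ℝ)
      = (-1 : ℝ) ^ (k + 1 - i) * (((k+1).choose i : ℕ) : ℝ) := by
    field_simp
  rw [h1, show k + 1 + i - 1 = k + i from by omega]
  rw [show (X:ℝ[X]) ^ k * (C ((-1 : ℝ) ^ (k + 1 - i) * (((k+1).choose i : ℕ) : ℝ)) * X ^ i)
      = C ((-1 : ℝ) ^ (k + 1 - i) * (((k+1).choose i : ℕ) : ℝ)) * X ^ (k + i) from by rw [pow_add]; ring]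
lemma claimA (k : ℕ) : ∑ i ∈ range (k + 1), C ((k.choose (i+1) : ℝ)) * X ^ (2*k - i)
    = (X : ℝ[X]) ^ (k+1) * (X + 1) ^ k - X ^ (2*k+1) := by
  rw [add_one_pow_expand k, Finset.mul_sum,
    Finset.sum_range_succ (fun i => (X:ℝ[X])^(k+1) * (C ((k.choose i : ℝ)) * X^i)) k,
    Finset.sum_range_succ (fun i => C ((k.choose (i+1) : ℝ)) * X ^ (2*k - i)) k,
    Nat.choose_succ_self, Nat.choose_self]
  simp only [Nat.cast_zero, map_zero, zero_mul, add_zero, Nat.cast_one, map_one, one_mul]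
  rw [show (X:ℝ[X])^(k+1) * X^k = X^(2*k+1) from by rw [← pow_add]; congr 1; omega,
    add_sub_cancel_right,
    ← Finset.sum_range_reflect (fun j => (X:ℝ[X])^(k+1) * (C ((k.choose j : ℝ)) * X ^ j)) k]
  apply Finset.sum_congr rfl
  intro i hi
  rw [Finset.mem_range] at hi
  have h1 : k.choose (i+1) = k.choose (k-1-i) := by
    rw [← Nat.choose_symm (show i+1 ≤ k by omega)]
    congr 1
    omega
  rw [h1, show 2*k - i = (k+1) + (k-1-i) from by omega, pow_add]
  ring

lemma claimB (k : ℕ) :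
    ∑ i ∈ range (k + 1), C ((-1:ℝ)^(i+1) * (((k+1).choose (i+1) : ℕ) : ℝ)) * X ^ (2*k - i)
    = (X : ℝ[X]) ^ k * (X - 1) ^ (k+1) - X ^ (2*k+1) := by
  rw [sub_one_pow_expand (k+1), Finset.mul_sum,
    Finset.sum_range_succ (fun i => (X:ℝ[X])^k * (C ((-1:ℝ)^(k+1-i) * (((k+1).choose i : ℕ) : ℝ)) * X^i)) (k+1),
    Nat.choose_self, Nat.sub_self]
  simp only [pow_zero, Nat.cast_one, one_mul, map_one]
  rw [show (X:ℝ[X])^k * X^(k+1) = X^(2*k+1) from by rw [← pow_add]; congr 1; omega,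
    add_sub_cancel_right,
    ← Finset.sum_range_reflect (fun j => (X:ℝ[X])^k * (C ((-1:ℝ)^(k+1-j) * (((k+1).choose j : ℕ) : ℝ)) * X ^ j)) (k+1)]
  apply Finset.sum_congr rfl
  intro i hi
  rw [Finset.mem_range] at hi
  have h1 : (k+1).choose (i+1) = (k+1).choose (k+1-1-i) := by
    rw [← Nat.choose_symm (show i+1 ≤ k+1 by omega)]
    congr 1
    omega
  have h2 : k+1 - (k+1-1-i) = i+1 := by omega
  rw [h1, h2, show 2*k - i = k + (k+1-1-i) from by omega, pow_add]
  ring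
noncomputable def Pp (q : ℝ) (k : ℕ) : ℝ[X] :=
  ∑ i ∈ range (k + 1),
    C ((q * (k.choose (i+1) : ℝ) + (-1:ℝ)^(i+1) * (((k+1).choose (i+1) : ℕ) : ℝ)) / ((2*k+1-i : ℕ) : ℝ))
      * X ^ (2*k+1-i)

lemma derivP (q : ℝ) (k : ℕ) : derivative (Pp q k) =
    C q * ((X : ℝ[X]) ^ (k+1) * (X + 1) ^ k) + X ^ k * (X - 1) ^ (k+1)
      - C (1 + q) * X ^ (2*k+1) := by
  rw [Pp, map_sum]
  have step : ∀ i ∈ range (k+1),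
      derivative (C ((q * (k.choose (i+1) : ℝ) + (-1:ℝ)^(i+1) * (((k+1).choose (i+1) : ℕ) : ℝ)) / ((2*k+1-i : ℕ) : ℝ)) * X ^ (2*k+1-i))
      = C q * (C ((k.choose (i+1) : ℝ)) * X ^ (2*k - i))
        + C ((-1:ℝ)^(i+1) * (((k+1).choose (i+1) : ℕ) : ℝ)) * X ^ (2*k - i) := by
    intro i hi
    rw [Finset.mem_range] at hi
    rw [derivative_C_mul_X_pow]
    have hne : ((2*k+1-i : ℕ) : ℝ) ≠ 0 := by
      have : (0:ℕ) < 2*k+1-i := by omega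
      positivity
    have h1 : (q * (k.choose (i+1) : ℝ) + (-1:ℝ)^(i+1) * (((k+1).choose (i+1) : ℕ) : ℝ)) / ((2*k+1-i : ℕ) : ℝ) * ((2*k+1-i : ℕ) : ℝ)
        = q * (k.choose (i+1) : ℝ) + (-1:ℝ)^(i+1) * (((k+1).choose (i+1) : ℕ) : ℝ) := by
      field_simp
    rw [h1, show 2*k+1-i-1 = 2*k-i from by omega, map_add, add_mul, C_mul]
    ring
  rw [Finset.sum_congr rfl step, Finset.sum_add_distrib, ← Finset.mul_sum, claimA, claimB, map_add, C_1]
  ring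

lemma Lsum {ι : Type*} (s : Finset ι) (a : ι → ℝ) (d : ι → ℕ) (N : ℕ)
    (hd : ∀ j ∈ s, d j < N) (E : ℕ → ℝ) :
    ∑ m ∈ range N, (∑ j ∈ s, C (a j) * X ^ (d j)).coeff m * E m
      = ∑ j ∈ s, a j * E (d j) := by
  have h1 : ∀ m, (∑ j ∈ s, C (a j) * X ^ (d j)).coeff m
      = ∑ j ∈ s, if m = d j then a j else 0 := by
    intro m
    rw [finset_sum_coeff]
    apply Finset.sum_congr rfl
    intro j _
    rw [coeff_C_mul, coeff_X_pow, mul_ite, mul_one, mul_zero]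
  calc ∑ m ∈ range N, (∑ j ∈ s, C (a j) * X ^ (d j)).coeff m * E m
      = ∑ m ∈ range N, ∑ j ∈ s, (if m = d j then a j else 0) * E m := by
        apply Finset.sum_congr rfl; intro m _; rw [h1, Finset.sum_mul]
    _ = ∑ j ∈ s, ∑ m ∈ range N, (if m = d j then a j else 0) * E m := Finset.sum_comm
    _ = ∑ j ∈ s, a j * E (d j) := by
        apply Finset.sum_congr rfl
        intro j hj
        simp_rw [ite_mul, zero_mul]
        rw [Finset.sum_ite_eq' (range N) (d j) (fun m => a j * E m)]
        simp [Finset.mem_range.mpr (hd j hj)]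

lemma Lmono (a : ℝ) (n N : ℕ) (hn : n < N) (E : ℕ → ℝ) :
    ∑ m ∈ range N, (C a * X ^ n).coeff m * E m = a * E n := by
  have := Lsum {0} (fun _ : ℕ => a) (fun _ => n) N (by simpa using hn) E
  simpa using this

lemma LXadd (b : ℝ) (n N : ℕ) (E : ℕ → ℝ) :
    ∑ m ∈ range N, (C b * ((X : ℝ[X]) + 1) ^ n).coeff m * E m
      = b * ∑ m ∈ range N, (n.choose m : ℝ) * E m := by
  rw [Finset.mul_sum]
  apply Finset.sum_congr rfl
  intro m _
  rw [coeff_C_mul, coeff_X_add_one_pow]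
  ring

lemma derivQcomp (k : ℕ) : derivative ((Qp k).comp (X + 1))
    = ((X : ℝ[X]) + 1) ^ k * X ^ (k+1) := by
  rw [derivative_comp, derivQ]
  simp only [derivative_add, derivative_X, derivative_one, add_zero, one_mul,
    mul_comp, pow_comp, X_comp, sub_comp, one_comp, add_sub_cancel_right]

lemma evalP0 (q : ℝ) (k : ℕ) : (Pp q k).eval 0 = 0 := by
  rw [Pp, eval_finset_sum]
  apply Finset.sum_eq_zero
  intro i hi
  rw [Finset.mem_range] at hi
  rw [eval_mul, eval_pow, eval_X, zero_pow (by omega : 2*k+1-i ≠ 0), mul_zero]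

lemma evalQ0 (k : ℕ) : (Qp k).eval 0 = 0 := by
  rw [Qp, eval_finset_sum]
  apply Finset.sum_eq_zero
  intro i hi
  rw [eval_mul, eval_pow, eval_X, zero_pow (by omega : k+1+i ≠ 0), mul_zero]

lemma mainId (q : ℝ) (k : ℕ) :
    Pp q k + C ((1+q) / ((2*k+2 : ℕ) : ℝ)) * X ^ (2*k+2) + C (q * (Qp k).eval 1) * X ^ 0
      = C q * (Qp k).comp (X + 1) + Qp k := by
  set lhs := Pp q k + C ((1+q) / ((2*k+2 : ℕ) : ℝ)) * X ^ (2*k+2) + C (q * (Qp k).eval 1) * X ^ 0 with hl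
  set rhs := C q * (Qp k).comp (X + 1) + Qp k with hr
  have hD : derivative (lhs - rhs) = 0 := by
    rw [map_sub, hl, hr]
    simp only [derivative_add]
    rw [derivP, derivative_C_mul_X_pow, derivative_C_mul_X_pow, derivative_C_mul, derivQcomp, derivQ]
    have h1 : (1+q) / ((2*k+2 : ℕ) : ℝ) * ((2*k+2 : ℕ) : ℝ) = 1 + q := by
      have : ((2*k+2 : ℕ) : ℝ) ≠ 0 := by positivity
      field_simp
    rw [h1, show 2*k+2-1 = 2*k+1 from by omega]
    simp only [Nat.cast_zero, mul_zero, map_zero, zero_mul, add_zero, map_add, C_1]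
    ring
  have hC := Polynomial.eq_C_of_derivative_eq_zero hD
  have hev : (lhs - rhs).eval 0 = 0 := by
    rw [eval_sub, hl, hr]
    simp only [eval_add, eval_mul, eval_C, eval_pow, eval_X, eval_comp, eval_one]
    rw [evalP0, evalQ0]
    norm_num
  have hc0 : (lhs - rhs).coeff 0 = 0 := by
    rw [hC] at hev
    simpa using hev
  have hz : lhs - rhs = 0 := by rw [hC, hc0, map_zero]
  exact sub_eq_zero.mp hz

lemma negpow {n i : ℕ} (h : i ≤ n) : (-1:ℝ)^(n-i) = (-1)^n * (-1)^i := by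
  have h2 : (-1:ℝ)^i * (-1)^i = 1 := by rw [← pow_add, ← two_mul, pow_mul]; norm_num
  have h1 : (-1:ℝ)^(n-i) * (-1)^i = (-1)^n := by rw [← pow_add, Nat.sub_add_cancel h]
  calc (-1:ℝ)^(n-i) = (-1)^(n-i) * ((-1)^i * (-1)^i) := by rw [h2, mul_one]
    _ = ((-1)^(n-i) * (-1)^i) * (-1)^i := by ring
    _ = (-1)^n * (-1)^i := by rw [h1]

lemma evalQ1 (k : ℕ) : (Qp k).eval 1
    = (-1:ℝ)^(k+1) * (((k+1)! : ℝ) * (k ! : ℝ) / (((2*k+2)! : ℕ) : ℝ)) := by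
  rw [Qp, eval_finset_sum]
  have step : ∀ i ∈ range (k+2),
      eval 1 (C ((-1 : ℝ) ^ (k + 1 - i) * (((k+1).choose i : ℕ) : ℝ) / ((k + 1 + i : ℕ) : ℝ)) * X ^ (k + 1 + i))
      = (-1:ℝ)^(k+1) * ((-1 : ℝ) ^ i * (((k+1).choose i : ℕ) : ℝ) / ((k : ℝ) + 1 + i)) := by
    intro i hi
    rw [Finset.mem_range] at hi
    rw [eval_mul, eval_pow, eval_X, one_pow, mul_one, eval_C, negpow (show i ≤ k+1 by omega)]
    push_cast
    ring
  rw [Finset.sum_congr rfl step, ← Finset.mul_sum, beta_sum (k+1) k]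
  rw [show k + (k+1) + 1 = 2*k+2 from by omega]

lemma LQcomp (q : ℝ) (E : ℕ → ℝ)
    (hE : ∀ n : ℕ, 1 ≤ n → q * ∑ j ∈ range (n + 1), (n.choose j : ℝ) * E j + E n = 0)
    (k : ℕ) :
    q * ∑ m ∈ range (2*k+3), ((Qp k).comp (X + 1)).coeff m * E m
      = ∑ i ∈ range (k+2),
          -(((-1 : ℝ) ^ (k + 1 - i) * (((k+1).choose i : ℕ) : ℝ) / ((k + 1 + i : ℕ) : ℝ)) * E (k+1+i)) := by
  have hcomp : (Qp k).comp (X + 1) = ∑ i ∈ range (k+2),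
      C ((-1 : ℝ) ^ (k + 1 - i) * (((k+1).choose i : ℕ) : ℝ) / ((k + 1 + i : ℕ) : ℝ)) * ((X:ℝ[X])+1) ^ (k+1+i) := by
    rw [Qp, Polynomial.sum_comp]
    apply Finset.sum_congr rfl
    intro i _
    rw [mul_comp, C_comp, pow_comp, X_comp]
  rw [hcomp]
  have h1 : ∀ m ∈ range (2*k+3),
      (∑ i ∈ range (k+2), C ((-1 : ℝ) ^ (k + 1 - i) * (((k+1).choose i : ℕ) : ℝ) / ((k + 1 + i : ℕ) : ℝ)) * ((X:ℝ[X])+1) ^ (k+1+i)).coeff m * E m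
      = ∑ i ∈ range (k+2), (C ((-1 : ℝ) ^ (k + 1 - i) * (((k+1).choose i : ℕ) : ℝ) / ((k + 1 + i : ℕ) : ℝ)) * ((X:ℝ[X])+1) ^ (k+1+i)).coeff m * E m := by
    intro m _
    rw [finset_sum_coeff, Finset.sum_mul]
  rw [Finset.sum_congr rfl h1, Finset.sum_comm, Finset.mul_sum]
  apply Finset.sum_congr rfl
  intro i hi
  rw [Finset.mem_range] at hi
  rw [LXadd]
  have h2 : ∑ m ∈ range (2*k+3), ((k+1+i).choose m : ℝ) * E m
      = ∑ m ∈ range (k+1+i+1), ((k+1+i).choose m : ℝ) * E m := by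
    symm
    apply Finset.sum_subset
    · apply Finset.range_subset_range.mpr
      omega
    · intro m _ hm
      rw [Finset.mem_range, not_lt] at hm
      rw [Nat.choose_eq_zero_of_lt (by omega), Nat.cast_zero, zero_mul]
  rw [h2]
  have h3 := hE (k+1+i) (by omega)
  have h4 : q * ∑ m ∈ range (k+1+i+1), ((k+1+i).choose m : ℝ) * E m = -E (k+1+i) := by
    linarith
  calc q * ((-1 : ℝ) ^ (k + 1 - i) * (((k+1).choose i : ℕ) : ℝ) / ((k + 1 + i : ℕ) : ℝ)
          * ∑ m ∈ range (k+1+i+1), ((k+1+i).choose m : ℝ) * E m)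
      = ((-1 : ℝ) ^ (k + 1 - i) * (((k+1).choose i : ℕ) : ℝ) / ((k + 1 + i : ℕ) : ℝ))
          * (q * ∑ m ∈ range (k+1+i+1), ((k+1+i).choose m : ℝ) * E m) := by ring
    _ = _ := by rw [h4]; ring

theorem stmt_2 (q : ℝ) (hq0 : q ≠ 0) (hq1 : q ≠ -1)
    (E : ℕ → ℝ) (hE0 : E 0 = 1)
    (hE : ∀ n : ℕ, 1 ≤ n →
      q * ∑ j ∈ range (n + 1), (n.choose j : ℝ) * E j + E n = 0)
    (k : ℕ) (hk : 1 ≤ k) :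
    ∑ j ∈ Icc 1 (k + 1),
      (q * (k.choose j : ℝ) + (-1 : ℝ) ^ j * ((k + 1).choose j : ℝ)) *
        (E (2 * k + 2 - j) / ((2 * k + 2 - j : ℕ) : ℝ))
    = q * (-1 : ℝ) ^ k / (((2 * k + 2 : ℕ) : ℝ) * ((2 * k + 1).choose k : ℝ))
      - (1 + q) * (E (2 * k + 2) / ((2 * k + 2 : ℕ) : ℝ)) := by
  have hLP := Lsum (range (k+1))
    (fun i => (q * (k.choose (i+1) : ℝ) + (-1:ℝ)^(i+1) * (((k+1).choose (i+1) : ℕ) : ℝ)) / ((2*k+1-i : ℕ) : ℝ))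
    (fun i => 2*k+1-i) (2*k+3) (fun j _ => by show 2*k+1-j < 2*k+3; omega) E
  have hLQ := Lsum (range (k+2))
    (fun i => (-1 : ℝ) ^ (k + 1 - i) * (((k+1).choose i : ℕ) : ℝ) / ((k + 1 + i : ℕ) : ℝ))
    (fun i => k+1+i) (2*k+3)
    (fun j hj => by rw [Finset.mem_range] at hj; show k+1+j < 2*k+3; omega) E
  have hId := congrArg (fun p : ℝ[X] => ∑ m ∈ range (2*k+3), p.coeff m * E m) (mainId q k)
  have hsplit : ∀ (p r : ℝ[X]), ∑ m ∈ range (2*k+3), (p + r).coeff m * E m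
      = ∑ m ∈ range (2*k+3), p.coeff m * E m + ∑ m ∈ range (2*k+3), r.coeff m * E m := by
    intro p r
    rw [← Finset.sum_add_distrib]
    apply Finset.sum_congr rfl
    intro m _
    rw [coeff_add]
    ring
  rw [hsplit, hsplit, hsplit] at hId
  rw [Lmono _ _ _ (by omega) E, Lmono _ _ _ (by omega) E] at hId
  have hCq : ∑ m ∈ range (2*k+3), (C q * (Qp k).comp (X+1)).coeff m * E m
      = q * ∑ m ∈ range (2*k+3), ((Qp k).comp (X+1)).coeff m * E m := by
    rw [Finset.mul_sum]
    apply Finset.sum_congr rfl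
    intro m _
    rw [coeff_C_mul]
    ring
  rw [hCq, LQcomp q E hE k] at hId
  rw [evalQ1, hE0, mul_one] at hId
  rw [Pp, hLP, Qp, hLQ] at hId
  rw [Finset.sum_neg_distrib, neg_add_cancel] at hId
  -- convert the goal's Icc sum to the range sum appearing in hId
  rw [show Finset.Icc 1 (k+1) = Finset.Ico 1 (k+2) from (Finset.Ico_add_one_right_eq_Icc 1 (k+1)).symm,
    Finset.sum_Ico_eq_sum_range, show k+2-1 = k+1 from rfl]
  have conv : ∀ i ∈ range (k+1),
      (q * (k.choose (1+i) : ℝ) + (-1:ℝ)^(1+i) * ((k+1).choose (1+i) : ℝ)) *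
        (E (2*k+2-(1+i)) / ((2*k+2-(1+i) : ℕ) : ℝ))
      = ((q * (k.choose (i+1) : ℝ) + (-1:ℝ)^(i+1) * (((k+1).choose (i+1) : ℕ) : ℝ)) / ((2*k+1-i : ℕ) : ℝ))
          * E (2*k+1-i) := by
    intro i hi
    rw [show 1+i = i+1 from by omega, show 2*k+2-(i+1) = 2*k+1-i from by omega]
    ring
  rw [Finset.sum_congr rfl conv]
  -- arithmetic finish
  have hchN : ((2*k+1).choose k) * k ! * (k+1)! = (2*k+1)! := by
    have h := Nat.choose_mul_factorial_mul_factorial (show k ≤ 2*k+1 by omega)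
    rwa [show 2*k+1-k = k+1 from by omega] at h
  have keyN : (2*k+2) * (((2*k+1).choose k) * k ! * (k+1)!) = (2*k+2)! := by
    rw [hchN, show (2*k+2) = (2*k+1)+1 from rfl]
    exact (Nat.factorial_succ (2*k+1)).symm
  have keyR : ((2*k+2 : ℕ) : ℝ) * (((2*k+1).choose k : ℕ) : ℝ) * ((k ! : ℝ) * (((k+1)! : ℕ) : ℝ))
      = (((2*k+2)! : ℕ) : ℝ) := by
    rw [← keyN]
    push_cast
    ring
  have hcne : ((2*k+2 : ℕ) : ℝ) ≠ 0 := by positivity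
  have hchne : (((2*k+1).choose k : ℕ) : ℝ) ≠ 0 :=
    Nat.cast_ne_zero.mpr (Nat.choose_pos (by omega)).ne'
  have hkfne : ((k ! : ℕ) : ℝ) ≠ 0 := Nat.cast_ne_zero.mpr (Nat.factorial_ne_zero _)
  have hk1fne : (((k+1)! : ℕ) : ℝ) ≠ 0 := Nat.cast_ne_zero.mpr (Nat.factorial_ne_zero _)
  have hc1 : (1+q)/((2*k+2 : ℕ) : ℝ) * E (2*k+2)
      = (1 + q) * (E (2*k+2) / ((2*k+2 : ℕ) : ℝ)) := by ring
  have hc2 : q * ((-1:ℝ)^(k+1) * ((((k+1)! : ℕ) : ℝ) * (k ! : ℝ) / (((2*k+2)! : ℕ) : ℝ)))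
      = -(q * (-1:ℝ)^k / (((2*k+2 : ℕ) : ℝ) * (((2*k+1).choose k : ℕ) : ℝ))) := by
    rw [pow_succ, ← keyR]
    field_simp
  linarith [hId, hc1, hc2]
end

section
/- For every integer k ≥ 1 and all x ∈ ℝ, one has [2]_q · Σ_{j=0}^{⌊k/2⌋} C(k,2j)·Ẽ_{2k-2j}(x) + (q−1) · Σ_{j=0}^{⌊k/2⌋} C(k,2j+1)·Ẽ_{2k-2j-1}(x) = [2]_q · x^k·(x−1)^k, where C(n,j) denotes the binomial coefficient (equal to 0 when j > n) and ⌊·⌋ is the floor function. -/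
open Finset Polynomial

noncomputable def Lfun (E : ℕ → ℝ) : Polynomial ℝ →ₗ[ℝ] ℝ :=
  Polynomial.lsum (fun i => LinearMap.toSpanSingleton ℝ ℝ (E i))

lemma Lfun_monomial (E : ℕ → ℝ) (n : ℕ) (a : ℝ) :
    Lfun E (monomial n a) = a * E n := by
  simp [Lfun, Polynomial.lsum_apply, Polynomial.sum_monomial_index,
    LinearMap.toSpanSingleton_apply, smul_eq_mul]

lemma Lfun_X_pow (E : ℕ → ℝ) (n : ℕ) :
    Lfun E ((X : Polynomial ℝ) ^ n) = E n := by
  rw [X_pow_eq_monomial, Lfun_monomial, one_mul]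

lemma Lkey (q : ℝ) (E : ℕ → ℝ) (hE0 : E 0 = 1)
    (hE : ∀ n : ℕ, 1 ≤ n →
      q * ∑ j ∈ range (n + 1), (n.choose j : ℝ) * E j + E n = 0)
    (p : Polynomial ℝ) :
    q * Lfun E (p.comp (X + 1)) + Lfun E p = (1 + q) * p.eval 0 := by
  induction p using Polynomial.induction_on' with
  | add p r hp hr =>
    simp only [add_comp, map_add, eval_add] at *
    ring_nf
    ring_nf at hp hr
    linarith
  | monomial n a =>
    have hX : ((X : Polynomial ℝ) + 1) ^ n
        = ∑ j ∈ range (n + 1), (n.choose j : ℝ) • (X : Polynomial ℝ) ^ j := by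
      rw [add_pow]
      refine Finset.sum_congr rfl fun j hj => ?_
      rw [smul_eq_C_mul, one_pow, mul_one, C_eq_natCast, mul_comm]
    have hLcomp : Lfun E ((monomial n a).comp (X + 1))
        = a * ∑ j ∈ range (n + 1), (n.choose j : ℝ) * E j := by
      rw [← C_mul_X_pow_eq_monomial, mul_comp, C_comp, pow_comp, X_comp, hX,
        Finset.mul_sum, map_sum, Finset.mul_sum]
      refine Finset.sum_congr rfl fun j hj => ?_
      rw [smul_eq_C_mul, ← mul_assoc, ← C_mul, ← smul_eq_C_mul, map_smul,
        Lfun_X_pow, smul_eq_mul, mul_assoc]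
    rw [hLcomp, Lfun_monomial, eval_monomial]
    rcases Nat.eq_zero_or_pos n with hn | hn
    · subst hn
      simp [hE0]
      ring
    · have h0 : (0 : ℝ) ^ n = 0 := zero_pow (by omega)
      rw [h0]
      linear_combination a * hE n hn

lemma sum_range_even_odd (f : ℕ → ℝ) (n : ℕ) :
    ∑ m ∈ range (2 * n), f m
      = ∑ j ∈ range n, f (2 * j) + ∑ j ∈ range n, f (2 * j + 1) := by
  induction n with
  | zero => simp
  | succ n ih =>
    have h2 : 2 * (n + 1) = (2 * n + 1) + 1 := by ring
    rw [h2, sum_range_succ, sum_range_succ, sum_range_succ, sum_range_succ, ih]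
    ring

theorem stmt_5 (q : ℝ) (hq0 : q ≠ 0) (hq1 : q ≠ -1)
    (E : ℕ → ℝ) (hE0 : E 0 = 1)
    (hE : ∀ n : ℕ, 1 ≤ n →
      q * ∑ j ∈ range (n + 1), (n.choose j : ℝ) * E j + E n = 0)
    (Ep : ℕ → ℝ → ℝ)
    (hEp : ∀ (n : ℕ) (x : ℝ),
      Ep n x = ∑ l ∈ range (n + 1), (n.choose l : ℝ) * E (n - l) * x ^ l)
    (k : ℕ) (hk : 1 ≤ k) (x : ℝ) :
    (1 + q) * ∑ j ∈ range (k / 2 + 1), (k.choose (2 * j) : ℝ) * Ep (2 * k - 2 * j) x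
      + (q - 1) * ∑ j ∈ range (k / 2 + 1),
          (k.choose (2 * j + 1) : ℝ) * Ep (2 * k - 2 * j - 1) x
    = (1 + q) * x ^ k * (x - 1) ^ k := by
  set A : Polynomial ℝ := X + C x with hA
  -- Ep in terms of Lfun
  have hEpL : ∀ n : ℕ, Ep n x = Lfun E (A ^ n) := by
    intro n
    rw [hEp, hA, add_pow, map_sum, ← Finset.sum_range_reflect]
    refine Finset.sum_congr rfl fun l hl => ?_
    rw [Finset.mem_range] at hl
    have hl' : l ≤ n := by omega
    have h1 : n + 1 - 1 - l = n - l := by omega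
    have h2 : n - (n - l) = l := by omega
    rw [h1, h2, Nat.choose_symm hl']
    have : (X : Polynomial ℝ) ^ l * C x ^ (n - l) * (n.choose l : Polynomial ℝ)
        = ((n.choose l : ℝ) * x ^ (n - l)) • (X : Polynomial ℝ) ^ l := by
      rw [smul_eq_C_mul, C_mul, C_eq_natCast, C_pow]
      ring
    rw [this, map_smul, Lfun_X_pow, smul_eq_mul]
    ring
  set f : ℕ → ℝ := fun m => (q + (-1 : ℝ) ^ m) * (k.choose m : ℝ) * Ep (2 * k - m) x
    with hf
  have step1 : (1 + q) * ∑ j ∈ range (k / 2 + 1),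
        (k.choose (2 * j) : ℝ) * Ep (2 * k - 2 * j) x
      + (q - 1) * ∑ j ∈ range (k / 2 + 1),
          (k.choose (2 * j + 1) : ℝ) * Ep (2 * k - 2 * j - 1) x
      = ∑ m ∈ range (2 * (k / 2 + 1)), f m := by
    rw [sum_range_even_odd, Finset.mul_sum, Finset.mul_sum]
    congr 1
    · refine Finset.sum_congr rfl fun j _ => ?_
      rw [hf]
      simp only [pow_mul, neg_one_sq, one_pow]
      ring
    · refine Finset.sum_congr rfl fun j _ => ?_
      rw [hf]
      simp only [pow_succ, pow_mul, neg_one_sq, one_pow, one_mul]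
      have : 2 * k - (2 * j + 1) = 2 * k - 2 * j - 1 := by omega
      rw [this]
      ring
  have step2 : ∑ m ∈ range (2 * (k / 2 + 1)), f m = ∑ m ∈ range (k + 1), f m := by
    symm
    refine Finset.sum_subset ?_ ?_
    · intro m hm
      rw [Finset.mem_range] at *
      omega
    · intro m _ hm
      rw [Finset.mem_range, not_lt] at hm
      rw [hf]
      have : k.choose m = 0 := Nat.choose_eq_zero_of_lt (by omega)
      simp [this]
  set P : Polynomial ℝ := A ^ k * (X + C (x - 1)) ^ k with hP
  have hcomp : P.comp (X + 1) = (A + 1) ^ k * A ^ k := by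
    rw [hP, hA, mul_comp, pow_comp, pow_comp, add_comp, add_comp, X_comp, C_comp,
      C_comp, C_sub, C_1]
    congr 1
    · congr 1
      ring
    · congr 1
      ring
  have hplus : (A + 1) ^ k * A ^ k
      = ∑ m ∈ range (k + 1), ((k.choose m : ℝ)) • A ^ (2 * k - m) := by
    have hexp : (A + 1) ^ k
        = ∑ m ∈ range (k + 1), A ^ m * (1 : Polynomial ℝ) ^ (k - m) * (k.choose m : Polynomial ℝ) :=
      add_pow A 1 k
    rw [hexp, Finset.sum_mul, ← Finset.sum_range_reflect]
    refine Finset.sum_congr rfl fun m hm => ?_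
    rw [Finset.mem_range] at hm
    have hm' : m ≤ k := by omega
    have h1 : k + 1 - 1 - m = k - m := by omega
    rw [h1, Nat.choose_symm hm']
    have h2 : k - m + k = 2 * k - m := by omega
    rw [one_pow, mul_one, smul_eq_C_mul, C_eq_natCast, ← h2, pow_add]
    ring
  have hminus : P = ∑ m ∈ range (k + 1),
      ((-1 : ℝ) ^ m * (k.choose m : ℝ)) • A ^ (2 * k - m) := by
    rw [hP, show (X + C (x - 1) : Polynomial ℝ) = A + C (-1) by
      rw [hA, C_neg, C_1, C_sub, C_1]; ring]
    have hexp : (A + C (-1 : ℝ)) ^ k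
        = ∑ m ∈ range (k + 1), A ^ m * (C (-1 : ℝ)) ^ (k - m) * (k.choose m : Polynomial ℝ) :=
      add_pow A (C (-1)) k
    rw [hexp, Finset.mul_sum, ← Finset.sum_range_reflect]
    refine Finset.sum_congr rfl fun m hm => ?_
    rw [Finset.mem_range] at hm
    have hm' : m ≤ k := by omega
    have h1 : k + 1 - 1 - m = k - m := by omega
    rw [h1, Nat.choose_symm hm']
    have h2 : k - (k - m) = m := by omega
    have h3 : k + (k - m) = 2 * k - m := by omega
    rw [h2, smul_eq_C_mul, C_mul, C_eq_natCast, C_pow, ← h3, pow_add]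
    ring
  have step3 : ∑ m ∈ range (k + 1), f m
      = q * Lfun E (P.comp (X + 1)) + Lfun E P := by
    rw [hcomp, hplus, hminus, map_sum, map_sum, Finset.mul_sum, ← Finset.sum_add_distrib]
    refine Finset.sum_congr rfl fun m _ => ?_
    simp only [hf]
    rw [map_smul, map_smul, smul_eq_mul, smul_eq_mul, ← hEpL]
    ring
  have step4 := Lkey q E hE0 hE P
  rw [step1, step2, step3, step4]
  have : P.eval 0 = x ^ k * (x - 1) ^ k := by
    simp [hP, hA]
  rw [this]
  ring
end

section
/- For every integer k ≥ 1, one has [2]_q · Σ_{j=0}^{⌊k/2⌋} C(k,2j)·Ẽ_{2k-2j+1}/(2k-2j+1) + (q−1) · Σ_{j=0}^{⌊k/2⌋} C(k,2j+1)·Ẽ_{2k-2j}/(2k-2j) = q·(−1)^{k+1} / ((2k+1)·C(2k,k)), where C(n,j) denotes the binomial coefficient (equal to 0 when j > n) and ⌊·⌋ is the floor function. -/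
open Finset Polynomial

lemma pair_sum (m : ℕ) (f : ℕ → ℝ) :
    ∑ n ∈ range (2*m), f n = ∑ j ∈ range m, (f (2*j) + f (2*j+1)) := by
  induction m with
  | zero => simp
  | succ m ih =>
    rw [show 2*(m+1) = (2*m + 1) + 1 by ring, sum_range_succ, sum_range_succ, ih, sum_range_succ]
    ring

lemma coeff_id (k m : ℕ) (hm : m ≤ 2*k) :
    ∑ i ∈ range (k+1), (-1:ℝ)^i * (k.choose i) * ((2*k-i).choose m) = (k.choose (2*k - m) : ℝ) := by
  have hpoly : ∑ i ∈ range (k+1), Polynomial.C ((-1:ℝ)^i * (k.choose i)) * (X+1)^(2*k-i)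
      = (X+1)^k * X^k := by
    have h1 : ∀ i ∈ range (k+1), Polynomial.C ((-1:ℝ)^i * (k.choose i)) * (X+1)^(2*k-i)
        = (X+1)^k * ((Polynomial.C (-1:ℝ))^i * (X+1)^(k-i) * (k.choose i : ℝ[X])) := by
      intro i hi
      have hik : i ≤ k := Nat.lt_succ_iff.mp (mem_range.mp hi)
      have h2 : 2*k - i = (k - i) + k := by omega
      rw [h2, pow_add, Polynomial.C_mul, ← Polynomial.C_pow, Polynomial.C_eq_natCast]
      ring
    rw [sum_congr rfl h1, ← mul_sum, ← add_pow]
    have h3 : Polynomial.C (-1:ℝ) + (X+1) = X := by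
      rw [Polynomial.C_neg, Polynomial.C_1]; ring
    rw [h3, mul_comm]
  have := congrArg (fun p => Polynomial.coeff p m) hpoly
  simp only [finset_sum_coeff, coeff_C_mul, coeff_X_add_one_pow] at this
  rw [coeff_mul_X_pow'] at this
  rw [this]
  by_cases hkm : k ≤ m
  · rw [if_pos hkm, coeff_X_add_one_pow,
      show 2*k - m = k - (m - k) by omega, Nat.choose_symm (by omega)]
  · rw [if_neg hkm, Nat.choose_eq_zero_of_lt (by omega : k < 2*k - m)]
    norm_num

lemma alt_sum : ∀ (k c : ℕ), ∑ i ∈ range (k+1), (-1:ℝ)^i * (k.choose i) / (i + c + 1)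
    = (k.factorial * c.factorial) / (k + c + 1).factorial := by
  intro k
  induction k with
  | zero =>
    intro c
    rw [Nat.factorial_succ]
    simp
    rw [eq_div_iff (by positivity)]
    push_cast
    field_simp
  | succ k ih =>
    intro c
    rw [sum_range_succ']
    have hf : ∀ i ∈ range (k+1), (-1:ℝ)^(i+1) * (((k+1).choose (i+1) : ℕ) : ℝ) / (↑(i+1) + ↑c + 1)
        = -((-1:ℝ)^i * (k.choose i) / (↑i + ↑(c+1) + 1))
          + (-1:ℝ)^(i+1) * (k.choose (i+1)) / (↑(i+1) + ↑c + 1) := by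
      intro i _
      rw [Nat.choose_succ_succ]
      push_cast
      ring
    rw [sum_congr rfl hf, sum_add_distrib]
    have hg : ∑ i ∈ range (k+1), (-1:ℝ)^(i+1) * (k.choose (i+1)) / (↑(i+1) + ↑c + 1)
          + (-1:ℝ)^0 * (((k+1).choose 0 : ℕ) : ℝ) / (↑(0:ℕ) + ↑c + 1)
        = ∑ i ∈ range (k+1), (-1:ℝ)^i * (k.choose i) / (↑i + ↑c + 1) := by
      have : (((k+1).choose 0 : ℕ) : ℝ) = ((k.choose 0 : ℕ) : ℝ) := by norm_num
      rw [this, ← sum_range_succ' (fun i => (-1:ℝ)^i * ((k.choose i : ℕ) : ℝ) / ((i:ℝ) + (c:ℝ) + 1)) (k+1),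
        sum_range_succ, Nat.choose_eq_zero_of_lt (by omega)]
      norm_num
    rw [add_assoc, hg, sum_neg_distrib, ih c, ih (c+1)]
    have hf1 : ((k + (c+1) + 1).factorial : ℝ) = (k + c + 2) * (k + c + 1).factorial := by
      rw [show k + (c+1) + 1 = (k + c + 1) + 1 by omega, Nat.factorial_succ]
      push_cast; ring
    have hf2 : ((k + 1 + c + 1).factorial : ℝ) = (k + c + 2) * (k + c + 1).factorial := by
      rw [show k + 1 + c + 1 = (k + c + 1) + 1 by omega, Nat.factorial_succ]
      push_cast; ring
    rw [hf1, hf2, Nat.factorial_succ c, Nat.factorial_succ k]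
    have hp1 : ((k+c+1).factorial : ℝ) ≠ 0 := Nat.cast_ne_zero.mpr (Nat.factorial_ne_zero _)
    field_simp
    push_cast
    ring

theorem stmt_6 (q : ℝ) (hq0 : q ≠ 0) (hq1 : q ≠ -1)
    (E : ℕ → ℝ) (hE0 : E 0 = 1)
    (hE : ∀ n : ℕ, 1 ≤ n →
      q * ∑ j ∈ range (n + 1), (n.choose j : ℝ) * E j + E n = 0)
    (k : ℕ) (hk : 1 ≤ k) :
    (1 + q) * ∑ j ∈ range (k / 2 + 1),
        (k.choose (2 * j) : ℝ) * (E (2 * k - 2 * j + 1) / ((2 * k - 2 * j + 1 : ℕ) : ℝ))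
      + (q - 1) * ∑ j ∈ range (k / 2 + 1),
          (k.choose (2 * j + 1) : ℝ) * (E (2 * k - 2 * j) / ((2 * k - 2 * j : ℕ) : ℝ))
    = q * (-1 : ℝ) ^ (k + 1) / (((2 * k + 1 : ℕ) : ℝ) * ((2 * k).choose k : ℝ)) := by
  -- Step A : combine the two sums into one over range (k+1)
  have stepA :
      (1 + q) * ∑ j ∈ range (k / 2 + 1),
        (k.choose (2 * j) : ℝ) * (E (2 * k - 2 * j + 1) / ((2 * k - 2 * j + 1 : ℕ) : ℝ))
      + (q - 1) * ∑ j ∈ range (k / 2 + 1),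
          (k.choose (2 * j + 1) : ℝ) * (E (2 * k - 2 * j) / ((2 * k - 2 * j : ℕ) : ℝ))
      = ∑ i ∈ range (k+1),
          (q + (-1:ℝ)^i) * (k.choose i : ℝ) * (E (2*k - i + 1) / ((2*k - i + 1 : ℕ) : ℝ)) := by
    have hext : ∑ i ∈ range (k+1),
          (q + (-1:ℝ)^i) * (k.choose i : ℝ) * (E (2*k - i + 1) / ((2*k - i + 1 : ℕ) : ℝ))
        = ∑ i ∈ range (2*(k/2+1)),
          (q + (-1:ℝ)^i) * (k.choose i : ℝ) * (E (2*k - i + 1) / ((2*k - i + 1 : ℕ) : ℝ)) := by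
      apply sum_subset (by rw [range_subset_range]; omega)
      intro i hi hni
      have h1 : i = k + 1 := by
        simp only [mem_range] at hi hni
        omega
      rw [h1, Nat.choose_eq_zero_of_lt (by omega)]
      norm_num
    rw [hext, pair_sum, mul_sum, mul_sum, ← sum_add_distrib]
    refine sum_congr rfl fun j hj => ?_
    have hj2 : j ≤ k / 2 := Nat.lt_succ_iff.mp (mem_range.mp hj)
    have he1 : (-1:ℝ)^(2*j) = 1 := by rw [pow_mul, neg_one_sq, one_pow]
    have he2 : (-1:ℝ)^(2*j+1) = -1 := by rw [pow_succ, he1, one_mul]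
    rw [he1, he2, show 2*k - (2*j+1) + 1 = 2*k - 2*j by omega,
      show 2*k - 2*j + 1 = 2*k - 2*j + 1 from rfl]
    ring
  rw [stepA]
  have stepA2 : ∑ i ∈ range (k+1),
          (q + (-1:ℝ)^i) * (k.choose i : ℝ) * (E (2*k - i + 1) / ((2*k - i + 1 : ℕ) : ℝ))
      = q * (∑ i ∈ range (k+1), (k.choose i : ℝ) * (E (2*k - i + 1) / ((2*k - i + 1 : ℕ) : ℝ)))
        + ∑ i ∈ range (k+1),
            ((-1:ℝ)^i * (k.choose i : ℝ) / ((2*k - i + 1 : ℕ) : ℝ)) * E (2*k - i + 1) := by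
    rw [mul_sum, ← sum_add_distrib]
    exact sum_congr rfl fun i _ => by ring
  rw [stepA2]
  -- the linear combination of recurrences
  have hsum : ∑ i ∈ range (k+1),
      ((-1:ℝ)^i * (k.choose i : ℝ) / ((2*k - i + 1 : ℕ) : ℝ)) *
        (q * ∑ j ∈ range (2*k+2), ((2*k - i + 1).choose j : ℝ) * E j + E (2*k - i + 1)) = 0 := by
    refine sum_eq_zero fun i hi => ?_
    have hik : i ≤ k := Nat.lt_succ_iff.mp (mem_range.mp hi)
    have h := hE (2*k - i + 1) (by omega)
    have hext : ∑ j ∈ range (2*k - i + 1 + 1), ((2*k - i + 1).choose j : ℝ) * E j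
        = ∑ j ∈ range (2*k+2), ((2*k - i + 1).choose j : ℝ) * E j := by
      apply sum_subset (by rw [range_subset_range]; omega)
      intro j hj hnj
      have : 2*k - i + 1 < j := by
        simp only [mem_range] at hj hnj
        omega
      rw [Nat.choose_eq_zero_of_lt this]
      norm_num
    rw [hext] at h
    rw [h, mul_zero]
  -- swap the double sum
  have hswap : ∑ i ∈ range (k+1),
      ((-1:ℝ)^i * (k.choose i : ℝ) / ((2*k - i + 1 : ℕ) : ℝ)) *
        (∑ j ∈ range (2*k+2), ((2*k - i + 1).choose j : ℝ) * E j)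
      = ∑ j ∈ range (2*k+2),
          (∑ i ∈ range (k+1), (-1:ℝ)^i * (k.choose i : ℝ) * (((2*k - i + 1).choose j : ℕ) : ℝ)
              / ((2*k - i + 1 : ℕ) : ℝ)) * E j := by
    have h1 : ∀ i ∈ range (k+1),
        ((-1:ℝ)^i * (k.choose i : ℝ) / ((2*k - i + 1 : ℕ) : ℝ)) *
          (∑ j ∈ range (2*k+2), ((2*k - i + 1).choose j : ℝ) * E j)
        = ∑ j ∈ range (2*k+2),
            ((-1:ℝ)^i * (k.choose i : ℝ) * (((2*k - i + 1).choose j : ℕ) : ℝ)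
              / ((2*k - i + 1 : ℕ) : ℝ)) * E j := by
      intro i _
      rw [mul_sum]
      exact sum_congr rfl fun j _ => by ring
    rw [sum_congr rfl h1, sum_comm]
    exact sum_congr rfl fun j _ => by rw [sum_mul]
  -- coefficient at j = 0
  have hcoef0 : ∑ i ∈ range (k+1),
      (-1:ℝ)^i * (k.choose i : ℝ) * (((2*k - i + 1).choose 0 : ℕ) : ℝ) / ((2*k - i + 1 : ℕ) : ℝ)
      = (-1:ℝ)^k * (k.factorial * k.factorial) / ((2*k+1).factorial) := by
    have h1 : ∀ i ∈ range (k+1),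
        (-1:ℝ)^i * (k.choose i : ℝ) * (((2*k - i + 1).choose 0 : ℕ) : ℝ) / ((2*k - i + 1 : ℕ) : ℝ)
        = (-1:ℝ)^i * (k.choose i : ℝ) / ((2*k - i + 1 : ℕ) : ℝ) := by
      intro i _
      rw [Nat.choose_zero_right]
      norm_num
    rw [sum_congr rfl h1,
      ← sum_range_reflect (fun i => (-1:ℝ)^i * (k.choose i : ℝ) / ((2*k - i + 1 : ℕ) : ℝ)) (k+1)]
    have h2 : ∀ i ∈ range (k+1),
        (-1:ℝ)^(k+1-1-i) * (k.choose (k+1-1-i) : ℝ) / ((2*k - (k+1-1-i) + 1 : ℕ) : ℝ)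
        = (-1:ℝ)^k * ((-1:ℝ)^i * (k.choose i : ℝ) / ((i:ℝ) + (k:ℝ) + 1)) := by
      intro i hi
      have hik : i ≤ k := Nat.lt_succ_iff.mp (mem_range.mp hi)
      have e1 : k + 1 - 1 - i = k - i := by omega
      rw [e1, Nat.choose_symm hik, show 2*k - (k-i) + 1 = i + k + 1 by omega]
      have ea : (-1:ℝ)^(k-i) * (-1:ℝ)^i = (-1:ℝ)^k := by
        rw [← pow_add, show k - i + i = k by omega]
      have hsq : (-1:ℝ)^i * (-1:ℝ)^i = 1 := by
        rw [← pow_add, ← two_mul, pow_mul]; norm_num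
      have e2 : (-1:ℝ)^(k-i) = (-1:ℝ)^k * (-1:ℝ)^i := by
        calc (-1:ℝ)^(k-i) = (-1:ℝ)^(k-i) * ((-1:ℝ)^i * (-1:ℝ)^i) := by rw [hsq, mul_one]
          _ = (-1:ℝ)^k * (-1:ℝ)^i := by rw [← mul_assoc, ea]
      rw [e2]
      push_cast
      ring
    rw [sum_congr rfl h2, ← mul_sum, alt_sum k k, show k + k + 1 = 2*k+1 by ring]
    ring
  -- coefficients at j = m+1
  have hcoefS : ∀ m ∈ range (2*k+1),
      (∑ i ∈ range (k+1), (-1:ℝ)^i * (k.choose i : ℝ) * (((2*k - i + 1).choose (m+1) : ℕ) : ℝ)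
          / ((2*k - i + 1 : ℕ) : ℝ))
      = (k.choose (2*k - m) : ℝ) / ((m+1 : ℕ) : ℝ) := by
    intro m hm
    have hm2 : m ≤ 2*k := Nat.lt_succ_iff.mp (mem_range.mp hm)
    have h1 : ∀ i ∈ range (k+1),
        (-1:ℝ)^i * (k.choose i : ℝ) * (((2*k - i + 1).choose (m+1) : ℕ) : ℝ)
          / ((2*k - i + 1 : ℕ) : ℝ)
        = ((-1:ℝ)^i * (k.choose i : ℝ) * (((2*k - i).choose m : ℕ) : ℝ)) / ((m+1 : ℕ) : ℝ) := by
      intro i hi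
      have hik : i ≤ k := Nat.lt_succ_iff.mp (mem_range.mp hi)
      have hch : (2*k - i + 1) * ((2*k - i).choose m) = (2*k - i + 1).choose (m+1) * (m+1) :=
        Nat.add_one_mul_choose_eq (2*k - i) m
      have hd1 : ((2*k - i + 1 : ℕ) : ℝ) ≠ 0 := Nat.cast_ne_zero.mpr (by omega)
      have hd2 : ((m + 1 : ℕ) : ℝ) ≠ 0 := Nat.cast_ne_zero.mpr (by omega)
      rw [div_eq_div_iff hd1 hd2]
      have hchR : ((2*k - i + 1 : ℕ) : ℝ) * (((2*k - i).choose m : ℕ) : ℝ)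
          = (((2*k - i + 1).choose (m+1) : ℕ) : ℝ) * ((m+1 : ℕ) : ℝ) := by
        exact_mod_cast hch
      linear_combination (-((-1:ℝ)^i * (k.choose i : ℝ))) * hchR
    rw [sum_congr rfl h1, ← sum_div, coeff_id k m hm2]
  -- the tail sum equals SA
  have htail : ∑ m ∈ range (2*k+1), ((k.choose (2*k - m) : ℝ) / ((m+1 : ℕ) : ℝ)) * E (m+1)
      = ∑ i ∈ range (k+1), (k.choose i : ℝ) * (E (2*k - i + 1) / ((2*k - i + 1 : ℕ) : ℝ)) := by
    rw [← sum_range_reflect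
      (fun m => ((k.choose (2*k - m) : ℝ) / ((m+1 : ℕ) : ℝ)) * E (m+1)) (2*k+1)]
    have h1 : ∀ m ∈ range (2*k+1),
        ((k.choose (2*k - (2*k+1-1-m)) : ℝ) / ((2*k+1-1-m+1 : ℕ) : ℝ)) * E (2*k+1-1-m+1)
        = (k.choose m : ℝ) * (E (2*k - m + 1) / ((2*k - m + 1 : ℕ) : ℝ)) := by
      intro m hm
      have hm2 : m ≤ 2*k := Nat.lt_succ_iff.mp (mem_range.mp hm)
      rw [show 2*k - (2*k+1-1-m) = m by omega, show 2*k+1-1-m+1 = 2*k - m + 1 by omega]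
      ring
    rw [sum_congr rfl h1]
    symm
    apply sum_subset (by rw [range_subset_range]; omega)
    intro m hm hnm
    have : k < m := by
      simp only [mem_range] at hm hnm
      omega
    rw [Nat.choose_eq_zero_of_lt this]
    norm_num
  -- assemble
  have hexp : ∑ i ∈ range (k+1),
      ((-1:ℝ)^i * (k.choose i : ℝ) / ((2*k - i + 1 : ℕ) : ℝ)) *
        (q * ∑ j ∈ range (2*k+2), ((2*k - i + 1).choose j : ℝ) * E j + E (2*k - i + 1))
      = q * (∑ i ∈ range (k+1),
          ((-1:ℝ)^i * (k.choose i : ℝ) / ((2*k - i + 1 : ℕ) : ℝ)) *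
            (∑ j ∈ range (2*k+2), ((2*k - i + 1).choose j : ℝ) * E j))
        + ∑ i ∈ range (k+1),
            ((-1:ℝ)^i * (k.choose i : ℝ) / ((2*k - i + 1 : ℕ) : ℝ)) * E (2*k - i + 1) := by
    rw [mul_sum, ← sum_add_distrib]
    exact sum_congr rfl fun i _ => by ring
  rw [hexp, hswap] at hsum
  have hD : ∑ j ∈ range (2*k+2),
      (∑ i ∈ range (k+1), (-1:ℝ)^i * (k.choose i : ℝ) * (((2*k - i + 1).choose j : ℕ) : ℝ)
          / ((2*k - i + 1 : ℕ) : ℝ)) * E j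
      = (-1:ℝ)^k * (k.factorial * k.factorial) / ((2*k+1).factorial)
        + ∑ i ∈ range (k+1), (k.choose i : ℝ) * (E (2*k - i + 1) / ((2*k - i + 1 : ℕ) : ℝ)) := by
    rw [sum_range_succ']
    rw [sum_congr rfl (fun m hm => by rw [hcoefS m hm]), htail, hcoef0, hE0, mul_one]
    ring
  rw [hD] at hsum
  -- relate the right-hand sides
  have hfac : (((2 * k + 1 : ℕ) : ℝ) * ((2 * k).choose k : ℝ)) * (k.factorial * k.factorial)
      = ((2*k+1).factorial : ℝ) := by
    have h := Nat.choose_mul_factorial_mul_factorial (show k ≤ 2*k by omega)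
    rw [show 2*k - k = k by omega] at h
    have : (2*k+1).factorial = (2*k+1) * ((2*k).choose k * k.factorial * k.factorial) := by
      rw [h, Nat.factorial_succ]
    rw [this]
    push_cast
    ring
  have hfacne : ((2*k+1).factorial : ℝ) ≠ 0 := Nat.cast_ne_zero.mpr (Nat.factorial_ne_zero _)
  have hne1 : ((2 * k + 1 : ℕ) : ℝ) ≠ 0 := Nat.cast_ne_zero.mpr (by omega)
  have hne2 : (((2 * k).choose k : ℕ) : ℝ) ≠ 0 :=
    Nat.cast_ne_zero.mpr (Nat.choose_pos (by omega)).ne'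
  have hkf : (k.factorial : ℝ) ≠ 0 := Nat.cast_ne_zero.mpr (Nat.factorial_ne_zero _)
  have hfin : q * (-1:ℝ)^(k+1) / (((2 * k + 1 : ℕ) : ℝ) * ((2 * k).choose k : ℝ))
      = -(q * ((-1:ℝ)^k * ((k.factorial : ℝ) * k.factorial) / ((2*k+1).factorial : ℝ))) := by
    rw [← hfac, pow_succ]
    field_simp
  rw [hfin]
  linear_combination hsum
end

section
/- For all integers k, m ≥ 1 and all x ∈ ℝ, one has Σ_{j=0}^{max(k,m)} (k+m−j)·[q·C(k,j) + (−1)^j·C(m,j)] · Ẽ_{k+m-j-1}(x) = [2]_q · x^{k−1}·(x−1)^{m−1}·((k+m)x − k), where C(n,j) denotes the binomial coefficient (equal to 0 when j > n). -/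
open Finset


lemma trinom (N s p : ℕ) (h : p + s ≤ N) :
    (N.choose (N - s)) * ((N - s).choose p) = N.choose (p + s) * ((p + s).choose p) := by
  have h1 := Nat.choose_mul (n := N) (Nat.le_add_left s p)
  simp only [Nat.add_sub_cancel] at h1
  rw [Nat.choose_symm (show s ≤ N by omega), Nat.choose_symm_add, h1]

lemma h2nat (n r j : ℕ) (hjr : j ≤ r) (hrn : r < n) :
    (n - j) * ((n - 1 - j).choose (r - j)) = (n - r) * ((n - j).choose (r - j)) := by
  have ha : n - j = (n - 1 - j) + 1 := by omega
  have h1 := Nat.add_one_mul_choose_eq (n - 1 - j) (r - j)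
  have h2 := Nat.choose_succ_right_eq (n - 1 - j + 1) (r - j)
  have h3 : n - 1 - j + 1 - (r - j) = n - r := by omega
  rw [ha, h1, h2, h3, Nat.mul_comm]

lemma mchoose (m k j : ℕ) (hm : 1 ≤ m) (hj : j ≤ m) :
    k * m.choose j + m * (m - 1).choose j = (k + m - j) * m.choose j := by
  have h1 := Nat.add_one_mul_choose_eq (m - 1) j
  have hm1 : m - 1 + 1 = m := by omega
  rw [hm1] at h1
  have h2 := Nat.choose_succ_right_eq m j
  rw [h1, h2]
  have : k + m - j = k + (m - j) := by omega
  rw [this, Nat.add_mul, Nat.mul_comm (m - j)]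


lemma tri (f : ℕ → ℕ → ℝ) (N : ℕ) :
    ∑ j ∈ range N, ∑ i ∈ range (N - j), f j i
      = ∑ r ∈ range N, ∑ j ∈ range (r + 1), f j (r - j) := by
  induction N with
  | zero => simp
  | succ N ih =>
    have h1 : ∀ j ∈ range N, ∑ i ∈ range (N + 1 - j), f j i
        = (∑ i ∈ range (N - j), f j i) + f j (N - j) := by
      intro j hj
      rw [Finset.mem_range] at hj
      have : N + 1 - j = (N - j) + 1 := by omega
      rw [this, Finset.sum_range_succ]
    calc ∑ j ∈ range (N + 1), ∑ i ∈ range (N + 1 - j), f j i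
        = (∑ j ∈ range N, ∑ i ∈ range (N + 1 - j), f j i)
            + ∑ i ∈ range (N + 1 - N), f N i := Finset.sum_range_succ _ _
      _ = (∑ j ∈ range N, ((∑ i ∈ range (N - j), f j i) + f j (N - j))) + f N 0 := by
          rw [Finset.sum_congr rfl h1]
          congr 1
          have : N + 1 - N = 1 := by omega
          rw [this, Finset.sum_range_one]
      _ = ((∑ j ∈ range N, ∑ i ∈ range (N - j), f j i)
            + ∑ j ∈ range N, f j (N - j)) + f N 0 := by rw [Finset.sum_add_distrib]
      _ = (∑ r ∈ range N, ∑ j ∈ range (r + 1), f j (r - j))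
            + (∑ j ∈ range N, f j (N - j) + f N 0) := by rw [ih, add_assoc]
      _ = ∑ r ∈ range (N + 1), ∑ j ∈ range (r + 1), f j (r - j) := by
          rw [Finset.sum_range_succ (fun r => ∑ j ∈ range (r + 1), f j (r - j)) N,
            Finset.sum_range_succ (fun j => f j (N - j)) N, Nat.sub_self]


lemma cid (k : ℕ) : ∀ m r : ℕ,
    ∑ j ∈ range (r + 1),
        (-1 : ℝ) ^ j * (m.choose j : ℝ) * ((k + m - j).choose (r - j) : ℝ)
      = (k.choose r : ℝ) := by
  intro m
  induction m with
  | zero =>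
    intro r
    rw [Finset.sum_eq_single 0]
    · simp
    · intro j hj hj0
      have : (0 : ℕ).choose j = 0 := Nat.choose_eq_zero_of_lt (by omega)
      simp [this]
    · simp
  | succ m ih =>
    intro r
    by_cases hr : r ≤ k + m + 1
    · -- main case
      have hsplit : ∀ j ∈ range (r + 1),
          (-1 : ℝ) ^ j * ((m + 1).choose j : ℝ) * ((k + (m + 1) - j).choose (r - j) : ℝ)
          = ((-1 : ℝ) ^ j * (m.choose j : ℝ) * ((k + m - j).choose (r - j) : ℝ)
              + (-1 : ℝ) ^ j * (m.choose j : ℝ)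
                * (if j = r then (0 : ℝ) else ((k + m - j).choose (r - 1 - j) : ℝ)))
            + (-1 : ℝ) ^ j * (if j = 0 then (0 : ℝ) else (m.choose (j - 1) : ℝ))
                * ((k + m + 1 - j).choose (r - j) : ℝ) := by
        intro j hj
        rw [Finset.mem_range] at hj
        have e1 : k + (m + 1) - j = k + m + 1 - j := by omega
        rw [e1]
        have e2 : ((m + 1).choose j : ℝ)
            = (m.choose j : ℝ) + (if j = 0 then (0 : ℝ) else (m.choose (j - 1) : ℝ)) := by
          rcases j with _ | i
          · simp
          · rw [Nat.choose_succ_succ' m i]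
            rw [if_neg (Nat.succ_ne_zero i)]
            have : i + 1 - 1 = i := rfl
            rw [this]
            push_cast
            ring
        have e3 : ((k + m + 1 - j).choose (r - j) : ℝ)
            = ((k + m - j).choose (r - j) : ℝ)
              + (if j = r then (0 : ℝ) else ((k + m - j).choose (r - 1 - j) : ℝ)) := by
          by_cases hjr : j = r
          · subst hjr
            simp [Nat.sub_self]
          · have hjr' : j < r := by omega
            have e4 : k + m + 1 - j = (k + m - j) + 1 := by omega
            have e5 : r - j = (r - 1 - j) + 1 := by omega
            rw [e4, e5, Nat.choose_succ_succ' (k + m - j) (r - 1 - j)]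
            have e6 : r - 1 - j + 1 = r - j := by omega
            rw [e6]
            push_cast
            rw [if_neg hjr]
            ring
        rw [e2, e3]
        ring
      rw [Finset.sum_congr rfl hsplit, Finset.sum_add_distrib, Finset.sum_add_distrib]
      rw [ih r]
      have hX : ∑ j ∈ range (r + 1),
          (-1 : ℝ) ^ j * (m.choose j : ℝ)
            * (if j = r then (0 : ℝ) else ((k + m - j).choose (r - 1 - j) : ℝ))
          = ∑ j ∈ range r,
              (-1 : ℝ) ^ j * (m.choose j : ℝ) * ((k + m - j).choose (r - 1 - j) : ℝ) := by
        rw [Finset.sum_range_succ]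
        have hpeel : (if r = r then (0 : ℝ) else ((k + m - r).choose (r - 1 - r) : ℝ)) = 0 := by
          simp
        rw [hpeel, mul_zero, add_zero]
        apply Finset.sum_congr rfl
        intro j hj
        rw [Finset.mem_range] at hj
        rw [if_neg (by omega : ¬ j = r)]
      have hB : ∑ j ∈ range (r + 1),
          (-1 : ℝ) ^ j * (if j = 0 then (0 : ℝ) else (m.choose (j - 1) : ℝ))
            * ((k + m + 1 - j).choose (r - j) : ℝ)
          = - ∑ j ∈ range r,
              (-1 : ℝ) ^ j * (m.choose j : ℝ) * ((k + m - j).choose (r - 1 - j) : ℝ) := by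
        rw [Finset.sum_range_succ']
        have hpeel : (if (0 : ℕ) = 0 then (0 : ℝ) else (m.choose (0 - 1) : ℝ)) = 0 := by simp
        rw [hpeel, mul_zero, zero_mul, add_zero]
        rw [← Finset.sum_neg_distrib]
        apply Finset.sum_congr rfl
        intro j hj
        rw [Finset.mem_range] at hj
        rw [if_neg (by omega : ¬ j + 1 = 0)]
        have e7 : j + 1 - 1 = j := rfl
        have e8 : k + m + 1 - (j + 1) = k + m - j := by omega
        have e9 : r - (j + 1) = r - 1 - j := by omega
        rw [e7, e8, e9]
        push_cast
        ring
      rw [hX, hB]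
      ring
    · -- degenerate case r > k + m + 1
      have hz : ∀ j ∈ range (r + 1),
          (-1 : ℝ) ^ j * ((m + 1).choose j : ℝ) * ((k + (m + 1) - j).choose (r - j) : ℝ)
            = 0 := by
        intro j hj
        rw [Finset.mem_range] at hj
        by_cases hjm : j ≤ m + 1
        · have : (k + (m + 1) - j).choose (r - j) = 0 :=
            Nat.choose_eq_zero_of_lt (by omega)
          simp [this]
        · have : (m + 1).choose j = 0 := Nat.choose_eq_zero_of_lt (by omega)
          simp [this]
      rw [Finset.sum_eq_zero hz]
      have : k.choose r = 0 := Nat.choose_eq_zero_of_lt (by omega)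
      simp [this]

lemma reflectshift (F G : ℕ → ℝ) (N p : ℕ) (hp : p ≤ N)
    (hF0 : ∀ l < p, F l = 0) (hG0 : ∀ i < p, G i = 0)
    (hFG : ∀ s ≤ N - p, F (N - s) = G (p + s)) :
    ∑ l ∈ range (N + 1), F l = ∑ i ∈ range (N + 1), G i := by
  have hsub : Finset.Ico p (N + 1) ⊆ range (N + 1) := by
    intro a ha
    rw [Finset.mem_Ico] at ha
    rw [Finset.mem_range]
    omega
  calc ∑ l ∈ range (N + 1), F l
      = ∑ l ∈ Finset.Ico p (N + 1), F l := by
        refine (Finset.sum_subset hsub ?_).symm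
        intro l hl hl'
        rw [Finset.mem_range] at hl
        rw [Finset.mem_Ico] at hl'
        exact hF0 l (by omega)
    _ = ∑ s ∈ range (N + 1 - p), F (p + s) := Finset.sum_Ico_eq_sum_range F p (N + 1)
    _ = ∑ s ∈ range (N + 1 - p), F (p + (N + 1 - p - 1 - s)) :=
        (Finset.sum_range_reflect (fun s => F (p + s)) (N + 1 - p)).symm
    _ = ∑ s ∈ range (N + 1 - p), G (p + s) := by
        apply Finset.sum_congr rfl
        intro s hs
        rw [Finset.mem_range] at hs
        have e : p + (N + 1 - p - 1 - s) = N - s := by omega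
        rw [e]
        exact hFG s (by omega)
    _ = ∑ i ∈ Finset.Ico p (N + 1), G i := (Finset.sum_Ico_eq_sum_range G p (N + 1)).symm
    _ = ∑ i ∈ range (N + 1), G i := by
        refine Finset.sum_subset hsub ?_
        intro i hi hi'
        rw [Finset.mem_range] at hi
        rw [Finset.mem_Ico] at hi'
        exact hG0 i (by omega)

lemma innerlem (E : ℕ → ℝ) (x y : ℝ) (N p : ℕ) (hp : p ≤ N) :
    ∑ l ∈ range (N + 1),
        (N.choose l : ℝ) * (l.choose p : ℝ) * E (N - l) * x ^ p * y ^ (l - p)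
    = ∑ i ∈ range (N + 1),
        (N.choose i : ℝ) * (i.choose p : ℝ) * E (i - p) * x ^ p * y ^ (N - i) := by
  apply reflectshift
  · exact hp
  · intro l hl
    have : l.choose p = 0 := Nat.choose_eq_zero_of_lt hl
    simp [this]
  · intro i hi
    have : i.choose p = 0 := Nat.choose_eq_zero_of_lt hi
    simp [this]
  · intro s hs
    have e1 : N - (N - s) = s := by omega
    have e2 : p + s - p = s := by omega
    have e3 : N - s - p = N - (p + s) := by omega
    have hc : ((N.choose (N - s) : ℕ) : ℝ) * (((N - s).choose p : ℕ) : ℝ)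
        = ((N.choose (p + s) : ℕ) : ℝ) * (((p + s).choose p : ℕ) : ℝ) := by
      exact_mod_cast congrArg (Nat.cast : ℕ → ℝ) (trinom N s p (by omega))
    rw [e1, e2, e3, hc]

lemma Ladd (E : ℕ → ℝ) (Ep : ℕ → ℝ → ℝ)
    (hEp : ∀ (n : ℕ) (x : ℝ),
      Ep n x = ∑ l ∈ range (n + 1), (n.choose l : ℝ) * E (n - l) * x ^ l)
    (N : ℕ) (x y : ℝ) :
    Ep N (x + y) = ∑ i ∈ range (N + 1), (N.choose i : ℝ) * Ep i x * y ^ (N - i) := by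
  calc Ep N (x + y)
      = ∑ l ∈ range (N + 1), (N.choose l : ℝ) * E (N - l) * (x + y) ^ l := hEp N (x + y)
    _ = ∑ l ∈ range (N + 1), ∑ p ∈ range (N + 1),
          (N.choose l : ℝ) * (l.choose p : ℝ) * E (N - l) * x ^ p * y ^ (l - p) := by
        apply Finset.sum_congr rfl
        intro l hl
        rw [Finset.mem_range] at hl
        rw [add_pow, Finset.mul_sum]
        rw [Finset.sum_subset (Finset.range_subset_range.mpr (by omega : l + 1 ≤ N + 1))
          (fun p hp hp' => by
            rw [Finset.mem_range] at hp hp'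
            have : l.choose p = 0 := Nat.choose_eq_zero_of_lt (by omega)
            simp [this])]
        apply Finset.sum_congr rfl
        intro p hp
        ring
    _ = ∑ p ∈ range (N + 1), ∑ l ∈ range (N + 1),
          (N.choose l : ℝ) * (l.choose p : ℝ) * E (N - l) * x ^ p * y ^ (l - p) :=
        Finset.sum_comm
    _ = ∑ p ∈ range (N + 1), ∑ i ∈ range (N + 1),
          (N.choose i : ℝ) * (i.choose p : ℝ) * E (i - p) * x ^ p * y ^ (N - i) := by
        apply Finset.sum_congr rfl
        intro p hp
        rw [Finset.mem_range] at hp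
        exact innerlem E x y N p (by omega)
    _ = ∑ i ∈ range (N + 1), ∑ p ∈ range (N + 1),
          (N.choose i : ℝ) * (i.choose p : ℝ) * E (i - p) * x ^ p * y ^ (N - i) :=
        Finset.sum_comm
    _ = ∑ i ∈ range (N + 1), (N.choose i : ℝ) * Ep i x * y ^ (N - i) := by
        apply Finset.sum_congr rfl
        intro i hi
        rw [Finset.mem_range] at hi
        rw [hEp i x, Finset.mul_sum, Finset.sum_mul]
        rw [← Finset.sum_subset (Finset.range_subset_range.mpr (by omega : i + 1 ≤ N + 1))
          (fun p hp hp' => by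
            rw [Finset.mem_range] at hp hp'
            have : i.choose p = 0 := Nat.choose_eq_zero_of_lt (by omega)
            simp [this])]
        apply Finset.sum_congr rfl
        intro p hp
        ring

lemma L2 (E : ℕ → ℝ) (Ep : ℕ → ℝ → ℝ)
    (hEp : ∀ (n : ℕ) (x : ℝ),
      Ep n x = ∑ l ∈ range (n + 1), (n.choose l : ℝ) * E (n - l) * x ^ l)
    (N : ℕ) (x : ℝ) :
    Ep N (x + 1) = ∑ i ∈ range (N + 1), (N.choose i : ℝ) * Ep (N - i) x := by
  rw [Ladd E Ep hEp N x 1]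
  simp only [one_pow, mul_one]
  rw [← Finset.sum_range_reflect (fun i => (N.choose i : ℝ) * Ep (N - i) x) (N + 1)]
  apply Finset.sum_congr rfl
  intro i hi
  rw [Finset.mem_range] at hi
  have e1 : N + 1 - 1 - i = N - i := by omega
  have e2 : N - (N - i) = i := by omega
  rw [e1, e2, Nat.choose_symm (by omega : i ≤ N)]

lemma L1 (q : ℝ) (E : ℕ → ℝ) (hE0 : E 0 = 1)
    (hE : ∀ n : ℕ, 1 ≤ n →
      q * ∑ j ∈ range (n + 1), (n.choose j : ℝ) * E j + E n = 0)
    (Ep : ℕ → ℝ → ℝ)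
    (hEp : ∀ (n : ℕ) (x : ℝ),
      Ep n x = ∑ l ∈ range (n + 1), (n.choose l : ℝ) * E (n - l) * x ^ l)
    (N : ℕ) (x : ℝ) :
    q * Ep N (x + 1) + Ep N x = (1 + q) * x ^ N := by
  have hrefl : ∀ i : ℕ, Ep i 1 = ∑ j ∈ range (i + 1), (i.choose j : ℝ) * E j := by
    intro i
    rw [hEp i 1]
    simp only [one_pow, mul_one]
    rw [← Finset.sum_range_reflect (fun j => (i.choose j : ℝ) * E j) (i + 1)]
    apply Finset.sum_congr rfl
    intro j hj
    rw [Finset.mem_range] at hj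
    have e1 : i + 1 - 1 - j = i - j := by omega
    rw [e1, Nat.choose_symm (by omega : j ≤ i)]
  have hval : ∀ i : ℕ, q * Ep i 1 + E i = if i = 0 then 1 + q else 0 := by
    intro i
    rw [hrefl i]
    rcases i with _ | n
    · simp [hE0]
      ring
    · rw [if_neg (Nat.succ_ne_zero n)]
      exact hE (n + 1) (by omega)
  have hswap : Ep N x = ∑ i ∈ range (N + 1), (N.choose i : ℝ) * E i * x ^ (N - i) := by
    rw [hEp N x]
    rw [← Finset.sum_range_reflect (fun i => (N.choose i : ℝ) * E i * x ^ (N - i)) (N + 1)]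
    apply Finset.sum_congr rfl
    intro l hl
    rw [Finset.mem_range] at hl
    have e1 : N + 1 - 1 - l = N - l := by omega
    have e2 : N - (N - l) = l := by omega
    rw [e1, e2, Nat.choose_symm (by omega : l ≤ N)]
  have hx1 : x + 1 = 1 + x := by ring
  rw [hx1, Ladd E Ep hEp N 1 x, hswap]
  rw [Finset.mul_sum, ← Finset.sum_add_distrib]
  have hterm : ∀ i ∈ range (N + 1),
      q * ((N.choose i : ℝ) * Ep i 1 * x ^ (N - i)) + (N.choose i : ℝ) * E i * x ^ (N - i)
        = (N.choose i : ℝ) * (if i = 0 then 1 + q else 0) * x ^ (N - i) := by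
    intro i hi
    rw [← hval i]
    ring
  rw [Finset.sum_congr rfl hterm]
  rw [Finset.sum_eq_single 0]
  · simp
  · intro b hb hb0
    rw [if_neg hb0]
    ring
  · intro h
    exact absurd (Finset.mem_range.mpr (by omega)) h

theorem stmt_7 (q : ℝ) (hq0 : q ≠ 0) (hq1 : q ≠ -1)
    (E : ℕ → ℝ) (hE0 : E 0 = 1)
    (hE : ∀ n : ℕ, 1 ≤ n →
      q * ∑ j ∈ range (n + 1), (n.choose j : ℝ) * E j + E n = 0)
    (Ep : ℕ → ℝ → ℝ)
    (hEp : ∀ (n : ℕ) (x : ℝ),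
      Ep n x = ∑ l ∈ range (n + 1), (n.choose l : ℝ) * E (n - l) * x ^ l)
    (k m : ℕ) (hk : 1 ≤ k) (hm : 1 ≤ m) (x : ℝ) :
    ∑ j ∈ range (max k m + 1),
      ((k + m - j : ℕ) : ℝ) *
        (q * (k.choose j : ℝ) + (-1 : ℝ) ^ j * (m.choose j : ℝ)) * Ep (k + m - j - 1) x
    = (1 + q) * x ^ (k - 1) * (x - 1) ^ (m - 1) * (((k + m : ℕ) : ℝ) * x - (k : ℝ)) := by
  -- binomial expansion of (x-1)^M
  have hxm : ∀ M : ℕ,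
      (x - 1) ^ M = ∑ j ∈ range (M + 1), (-1 : ℝ) ^ j * (M.choose j : ℝ) * x ^ (M - j) := by
    intro M
    rw [sub_eq_add_neg, add_pow]
    rw [← Finset.sum_range_reflect (fun j => (-1 : ℝ) ^ j * (M.choose j : ℝ) * x ^ (M - j))
      (M + 1)]
    apply Finset.sum_congr rfl
    intro i hi
    rw [Finset.mem_range] at hi
    have e1 : M + 1 - 1 - i = M - i := by omega
    have e2 : M - (M - i) = i := by omega
    rw [e1, e2, Nat.choose_symm (by omega : i ≤ M)]
    ring
  -- step 0 : extend the sum to range (k + m)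
  have hmax : max k m + 1 ≤ k + m := by omega
  have hz : ∀ j ∈ range (k + m), j ∉ range (max k m + 1) →
      ((k + m - j : ℕ) : ℝ) *
        (q * (k.choose j : ℝ) + (-1 : ℝ) ^ j * (m.choose j : ℝ)) * Ep (k + m - j - 1) x
        = 0 := by
    intro j hj hj'
    rw [Finset.mem_range] at hj
    rw [Finset.mem_range, not_lt] at hj'
    have h1 : k.choose j = 0 := Nat.choose_eq_zero_of_lt (by omega)
    have h2 : m.choose j = 0 := Nat.choose_eq_zero_of_lt (by omega)
    rw [h1, h2]
    push_cast
    ring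
  rw [Finset.sum_subset (Finset.range_subset_range.mpr hmax) hz]
  -- split the sum
  have hsplitL : ∀ j ∈ range (k + m),
      ((k + m - j : ℕ) : ℝ) *
        (q * (k.choose j : ℝ) + (-1 : ℝ) ^ j * (m.choose j : ℝ)) * Ep (k + m - j - 1) x
      = q * (((k + m - j : ℕ) : ℝ) * (k.choose j : ℝ) * Ep (k + m - 1 - j) x)
        + (-1 : ℝ) ^ j * ((k + m - j : ℕ) : ℝ) * (m.choose j : ℝ) * Ep (k + m - 1 - j) x := by
    intro j hj
    have e : k + m - j - 1 = k + m - 1 - j := by omega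
    rw [e]
    ring
  rw [Finset.sum_congr rfl hsplitL, Finset.sum_add_distrib, ← Finset.mul_sum]
  -- RHS rewriting
  have hb1 : x ^ (k - 1) * (x - 1) ^ m
      = ∑ j ∈ range (m + 1), (-1 : ℝ) ^ j * (m.choose j : ℝ) * x ^ (k + m - 1 - j) := by
    rw [hxm m, Finset.mul_sum]
    apply Finset.sum_congr rfl
    intro j hj
    rw [Finset.mem_range] at hj
    have e : k + m - 1 - j = (k - 1) + (m - j) := by omega
    rw [e, pow_add]
    ring
  have hb2 : x ^ k * (x - 1) ^ (m - 1)
      = ∑ j ∈ range (m + 1), (-1 : ℝ) ^ j * ((m - 1).choose j : ℝ) * x ^ (k + m - 1 - j) := by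
    have e0 : m - 1 + 1 = m := by omega
    rw [hxm (m - 1), e0, Finset.mul_sum]
    rw [← Finset.sum_subset (Finset.range_subset_range.mpr (by omega : m ≤ m + 1)) (by
      intro j hj hj'
      rw [Finset.mem_range] at hj
      rw [Finset.mem_range, not_lt] at hj'
      have : (m - 1).choose j = 0 := Nat.choose_eq_zero_of_lt (by omega)
      rw [this]
      push_cast
      ring)]
    apply Finset.sum_congr rfl
    intro j hj
    rw [Finset.mem_range] at hj
    have e : k + m - 1 - j = k + (m - 1 - j) := by omega
    rw [e, pow_add]
    ring
  have hfact : (1 + q) * x ^ (k - 1) * (x - 1) ^ (m - 1) * (((k + m : ℕ) : ℝ) * x - (k : ℝ))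
      = (1 + q) * ((k : ℝ) * (x ^ (k - 1) * (x - 1) ^ m)
          + (m : ℝ) * (x ^ k * (x - 1) ^ (m - 1))) := by
    have e1 : (x : ℝ) ^ k = x ^ (k - 1) * x := by
      rw [← pow_succ]
      congr 1
      omega
    have e2 : (x - 1) ^ m = (x - 1) ^ (m - 1) * (x - 1) := by
      rw [← pow_succ]
      congr 1
      omega
    rw [e1, e2]
    push_cast
    ring
  have hRHS : (1 + q) * x ^ (k - 1) * (x - 1) ^ (m - 1) * (((k + m : ℕ) : ℝ) * x - (k : ℝ))
      = q * (∑ j ∈ range (k + m),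
            (-1 : ℝ) ^ j * ((k + m - j : ℕ) : ℝ) * (m.choose j : ℝ) * Ep (k + m - 1 - j) (x + 1))
        + ∑ j ∈ range (k + m),
            (-1 : ℝ) ^ j * ((k + m - j : ℕ) : ℝ) * (m.choose j : ℝ) * Ep (k + m - 1 - j) x := by
    calc (1 + q) * x ^ (k - 1) * (x - 1) ^ (m - 1) * (((k + m : ℕ) : ℝ) * x - (k : ℝ))
        = (1 + q) * ((k : ℝ) * (x ^ (k - 1) * (x - 1) ^ m)
            + (m : ℝ) * (x ^ k * (x - 1) ^ (m - 1))) := hfact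
      _ = ∑ j ∈ range (m + 1),
            (-1 : ℝ) ^ j * ((k + m - j : ℕ) : ℝ) * (m.choose j : ℝ)
              * ((1 + q) * x ^ (k + m - 1 - j)) := by
          rw [hb1, hb2, Finset.mul_sum, Finset.mul_sum, ← Finset.sum_add_distrib,
            Finset.mul_sum]
          apply Finset.sum_congr rfl
          intro j hj
          rw [Finset.mem_range] at hj
          have hc := mchoose m k j hm (by omega)
          have hc' : (k : ℝ) * (m.choose j : ℝ) + (m : ℝ) * ((m - 1).choose j : ℝ)
              = ((k + m - j : ℕ) : ℝ) * (m.choose j : ℝ) := by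
            exact_mod_cast congrArg (Nat.cast : ℕ → ℝ) hc
          linear_combination ((1 + q) * x ^ (k + m - 1 - j) * (-1 : ℝ) ^ j) * hc'
      _ = ∑ j ∈ range (k + m),
            (-1 : ℝ) ^ j * ((k + m - j : ℕ) : ℝ) * (m.choose j : ℝ)
              * ((1 + q) * x ^ (k + m - 1 - j)) := by
          apply Finset.sum_subset (Finset.range_subset_range.mpr (by omega : m + 1 ≤ k + m))
          intro j hj hj'
          rw [Finset.mem_range] at hj
          rw [Finset.mem_range, not_lt] at hj'
          have : m.choose j = 0 := Nat.choose_eq_zero_of_lt (by omega)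
          rw [this]
          push_cast
          ring
      _ = ∑ j ∈ range (k + m),
            (-1 : ℝ) ^ j * ((k + m - j : ℕ) : ℝ) * (m.choose j : ℝ)
              * (q * Ep (k + m - 1 - j) (x + 1) + Ep (k + m - 1 - j) x) := by
          apply Finset.sum_congr rfl
          intro j hj
          rw [L1 q E hE0 hE Ep hEp (k + m - 1 - j) x]
      _ = q * (∑ j ∈ range (k + m),
            (-1 : ℝ) ^ j * ((k + m - j : ℕ) : ℝ) * (m.choose j : ℝ) * Ep (k + m - 1 - j) (x + 1))
          + ∑ j ∈ range (k + m),
            (-1 : ℝ) ^ j * ((k + m - j : ℕ) : ℝ) * (m.choose j : ℝ) * Ep (k + m - 1 - j) x := by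
          rw [Finset.mul_sum, ← Finset.sum_add_distrib]
          apply Finset.sum_congr rfl
          intro j hj
          ring
  -- the key identity
  have key : ∑ j ∈ range (k + m),
        (-1 : ℝ) ^ j * ((k + m - j : ℕ) : ℝ) * (m.choose j : ℝ) * Ep (k + m - 1 - j) (x + 1)
      = ∑ j ∈ range (k + m),
        ((k + m - j : ℕ) : ℝ) * (k.choose j : ℝ) * Ep (k + m - 1 - j) x := by
    have hL2 : ∀ j ∈ range (k + m), Ep (k + m - 1 - j) (x + 1)
        = ∑ i ∈ range (k + m - j), ((k + m - 1 - j).choose i : ℝ) * Ep (k + m - 1 - j - i) x := by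
      intro j hj
      rw [Finset.mem_range] at hj
      have h := L2 E Ep hEp (k + m - 1 - j) x
      have e : k + m - 1 - j + 1 = k + m - j := by omega
      rw [e] at h
      exact h
    calc ∑ j ∈ range (k + m),
          (-1 : ℝ) ^ j * ((k + m - j : ℕ) : ℝ) * (m.choose j : ℝ) * Ep (k + m - 1 - j) (x + 1)
        = ∑ j ∈ range (k + m), ∑ i ∈ range (k + m - j),
            (-1 : ℝ) ^ j * ((k + m - j : ℕ) : ℝ) * (m.choose j : ℝ)
              * ((k + m - 1 - j).choose i : ℝ) * Ep (k + m - 1 - j - i) x := by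
          apply Finset.sum_congr rfl
          intro j hj
          rw [hL2 j hj, Finset.mul_sum]
          apply Finset.sum_congr rfl
          intro i hi
          ring
      _ = ∑ r ∈ range (k + m), ∑ j ∈ range (r + 1),
            (-1 : ℝ) ^ j * ((k + m - j : ℕ) : ℝ) * (m.choose j : ℝ)
              * ((k + m - 1 - j).choose (r - j) : ℝ) * Ep (k + m - 1 - j - (r - j)) x :=
          tri (fun j i => (-1 : ℝ) ^ j * ((k + m - j : ℕ) : ℝ) * (m.choose j : ℝ)
              * ((k + m - 1 - j).choose i : ℝ) * Ep (k + m - 1 - j - i) x) (k + m)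
      _ = ∑ r ∈ range (k + m),
            ((k + m - r : ℕ) : ℝ) * (k.choose r : ℝ) * Ep (k + m - 1 - r) x := by
          apply Finset.sum_congr rfl
          intro r hr
          rw [Finset.mem_range] at hr
          calc ∑ j ∈ range (r + 1),
                (-1 : ℝ) ^ j * ((k + m - j : ℕ) : ℝ) * (m.choose j : ℝ)
                  * ((k + m - 1 - j).choose (r - j) : ℝ) * Ep (k + m - 1 - j - (r - j)) x
              = (∑ j ∈ range (r + 1),
                  (-1 : ℝ) ^ j * (m.choose j : ℝ) * ((k + m - j).choose (r - j) : ℝ))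
                  * (((k + m - r : ℕ) : ℝ) * Ep (k + m - 1 - r) x) := by
                rw [Finset.sum_mul]
                apply Finset.sum_congr rfl
                intro j hj
                rw [Finset.mem_range] at hj
                have e : k + m - 1 - j - (r - j) = k + m - 1 - r := by omega
                have hc : ((k + m - j : ℕ) : ℝ) * (((k + m - 1 - j).choose (r - j) : ℕ) : ℝ)
                    = ((k + m - r : ℕ) : ℝ) * (((k + m - j).choose (r - j) : ℕ) : ℝ) := by
                  exact_mod_cast congrArg (Nat.cast : ℕ → ℝ)
                    (h2nat (k + m) r j (by omega) (by omega))
                rw [e]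
                linear_combination ((-1 : ℝ) ^ j * (m.choose j : ℝ) * Ep (k + m - 1 - r) x) * hc
            _ = (k.choose r : ℝ) * (((k + m - r : ℕ) : ℝ) * Ep (k + m - 1 - r) x) := by
                rw [cid k m r]
            _ = ((k + m - r : ℕ) : ℝ) * (k.choose r : ℝ) * Ep (k + m - 1 - r) x := by
                ring
  rw [hRHS, key]
end

section
/- Let B : ℕ → ℝ be any sequence. For all integers k, m ≥ 1, one has [2]_q · Σ_{l=0}^{m} C(m,l)·(−1)^{m−l}·B_{l+k} = Σ_{j=0}^{max(k,m)} [q·C(k,j) + (−1)^j·C(m,j)] · Σ_{l=0}^{k+m-j} C(k+m−j,l)·Ẽ_{k+m-j-l}·B_l, where C(n,j) denotes the binomial coefficient (equal to 0 when j > n). -/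
open Finset Polynomial

/-- triangle swap -/
private lemma tri_swap (n : ℕ) (F : ℕ → ℕ → ℝ) :
    ∑ j ∈ range (n+1), ∑ l ∈ range (j+1), F j l
      = ∑ l ∈ range (n+1), ∑ d ∈ range (n+1-l), F (l+d) l := by
  induction n with
  | zero => simp
  | succ n ih =>
      rw [sum_range_succ, ih]
      have h1 : ∑ l ∈ range (n+1+1), ∑ d ∈ range (n+1+1-l), F (l+d) l
          = (∑ l ∈ range (n+1), ∑ d ∈ range (n+1+1-l), F (l+d) l) + F (n+1) (n+1) := by
        rw [sum_range_succ]
        norm_num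
      have h2 : ∀ l ∈ range (n+1), ∑ d ∈ range (n+1+1-l), F (l+d) l
          = (∑ d ∈ range (n+1-l), F (l+d) l) + F (n+1) l := by
        intro l hl
        rw [mem_range] at hl
        have e1 : n+1+1-l = (n+1-l)+1 := by omega
        rw [e1, sum_range_succ]
        congr 2
        omega
      rw [h1, sum_congr rfl h2, sum_add_distrib, sum_range_succ (fun l => F (n+1) l) (n+1)]
      ring

private lemma tri_swap' (n : ℕ) (G : ℕ → ℕ → ℝ) :
    ∑ l ∈ range (n+1), ∑ d ∈ range (n+1-l), G l d
      = ∑ d ∈ range (n+1), ∑ l ∈ range (n+1-d), G l d := by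
  have h1 := tri_swap n (fun j l => G l (j - l))
  have h2 := tri_swap n (fun j d => G (j - d) d)
  simp only [Nat.add_sub_cancel_left] at h1 h2
  rw [← h1, ← h2]
  refine sum_congr rfl fun j hj => ?_
  rw [← Finset.sum_range_reflect (fun d => G (j - d) d) (j+1)]
  refine sum_congr rfl fun l hl => ?_
  rw [mem_range] at hl
  have e1 : j + 1 - 1 - l = j - l := by omega
  have e2 : j - (j - l) = l := by omega
  rw [e1, e2]

private def Sfun (E B : ℕ → ℝ) (n : ℕ) : ℝ :=
  ∑ l ∈ range (n+1), (n.choose l : ℝ) * E l * B (n - l)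

private lemma Sfun_reflect (E B : ℕ → ℝ) (K : ℕ) :
    Sfun E B K = ∑ l ∈ range (K+1), (K.choose l : ℝ) * E (K - l) * B l := by
  rw [Sfun, ← Finset.sum_range_reflect (fun l => (K.choose l : ℝ) * E (K - l) * B l) (K+1)]
  refine sum_congr rfl fun l hl => ?_
  rw [mem_range] at hl
  have e1 : K + 1 - 1 - l = K - l := by omega
  have e2 : K - (K - l) = l := by omega
  rw [e1, Nat.choose_symm (by omega), e2]

private lemma K2 (q : ℝ) (E B : ℕ → ℝ)
    (hrel : ∀ s : ℕ, q * ∑ l ∈ range (s+1), (s.choose l : ℝ) * E l + E s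
      = if s = 0 then 1 + q else 0) (n : ℕ) :
    q * (∑ j ∈ range (n+1), (n.choose j : ℝ) * Sfun E B j) + Sfun E B n = (1 + q) * B n := by
  have step1 : ∑ j ∈ range (n+1), (n.choose j : ℝ) * Sfun E B j
      = ∑ d ∈ range (n+1), (n.choose d : ℝ) * B d *
          (∑ l ∈ range ((n-d)+1), ((n-d).choose l : ℝ) * E l) := by
    have e0 : ∑ j ∈ range (n+1), (n.choose j : ℝ) * Sfun E B j
        = ∑ j ∈ range (n+1), ∑ l ∈ range (j+1),
            ((n.choose j : ℝ) * (j.choose l : ℝ)) * E l * B (j - l) := by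
      refine sum_congr rfl fun j hj => ?_
      rw [Sfun, mul_sum]
      refine sum_congr rfl fun l hl => by ring
    rw [e0, tri_swap n (fun j l => ((n.choose j : ℝ) * (j.choose l : ℝ)) * E l * B (j - l))]
    have e1 : ∀ l ∈ range (n+1), ∀ d ∈ range (n+1-l),
        ((n.choose (l+d) : ℝ) * ((l+d).choose l : ℝ)) * E l * B ((l+d) - l)
          = ((n.choose d : ℝ) * ((n-d).choose l : ℝ)) * E l * B d := by
      intro l hl d hd
      rw [mem_range] at hl hd
      have hld : l + d ≤ n := by omega
      have hsym : (l+d).choose l = (l+d).choose d := by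
        rw [← Nat.choose_symm (Nat.le_add_right l d)]
        congr 1
        omega
      have hcm : n.choose (l+d) * ((l+d).choose d) = n.choose d * ((n-d).choose l) := by
        have := Nat.choose_mul (n := n) (k := l + d) (s := d) (Nat.le_add_left d l)
        simpa [Nat.add_sub_cancel] using this
      have : (n.choose (l+d) : ℝ) * ((l+d).choose l : ℝ)
          = (n.choose d : ℝ) * ((n-d).choose l : ℝ) := by
        rw [hsym]
        exact_mod_cast congrArg (Nat.cast : ℕ → ℝ) hcm
      rw [this, Nat.add_sub_cancel_left]
    rw [sum_congr rfl (fun l hl => sum_congr rfl (fun d hd => e1 l hl d hd)),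
      tri_swap' n (fun l d => ((n.choose d : ℝ) * ((n-d).choose l : ℝ)) * E l * B d)]
    refine sum_congr rfl fun d hd => ?_
    rw [mem_range] at hd
    have e2 : n + 1 - d = (n - d) + 1 := by omega
    rw [e2, mul_sum]
    refine sum_congr rfl fun l hl => by ring
  have step2 : Sfun E B n = ∑ d ∈ range (n+1), (n.choose d : ℝ) * E (n - d) * B d :=
    Sfun_reflect E B n
  rw [step1, step2, mul_sum, ← sum_add_distrib]
  have step3 : ∀ d ∈ range (n+1),
      q * ((n.choose d : ℝ) * B d * (∑ l ∈ range ((n-d)+1), ((n-d).choose l : ℝ) * E l))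
        + (n.choose d : ℝ) * E (n - d) * B d
      = (n.choose d : ℝ) * B d * (if n - d = 0 then 1 + q else 0) := by
    intro d hd
    rw [← hrel (n - d)]
    ring
  rw [sum_congr rfl step3]
  rw [Finset.sum_eq_single n]
  · simp
    ring
  · intro d hd hdn
    rw [mem_range] at hd
    have : ¬ (n - d = 0) := by omega
    rw [if_neg this, mul_zero]
  · intro h
    exact (h (self_mem_range_succ n)).elim

private def LS (S : ℕ → ℝ) : Polynomial ℝ →+ ℝ where
  toFun p := p.sum fun n a => a * S n
  map_zero' := Polynomial.sum_zero_index _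
  map_add' p q := Polynomial.sum_add_index p q (fun n a => a * S n)
    (fun i => zero_mul (S i)) (fun a b₁ b₂ => add_mul b₁ b₂ (S a))

private lemma LS_monomial (S : ℕ → ℝ) (n : ℕ) (a : ℝ) :
    LS S (monomial n a) = a * S n :=
  Polynomial.sum_monomial_index a (fun n a => a * S n) (zero_mul (S n))

private lemma LS_pow_mul (S : ℕ → ℝ) (n : ℕ) (c : ℝ) :
    LS S ((X + 1)^n * C c) = c * ∑ j ∈ range (n+1), (n.choose j : ℝ) * S j := by
  have e : ((X + 1 : ℝ[X]))^n * C c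
      = ∑ j ∈ range (n+1), monomial j ((n.choose j : ℝ) * c) := by
    rw [add_pow, sum_mul]
    refine sum_congr rfl fun j hj => ?_
    rw [one_pow, mul_one, ← C_eq_natCast, mul_assoc, ← C_mul,
      mul_comm (X ^ j) (C ((n.choose j : ℝ) * c)), C_mul_X_pow_eq_monomial]
  rw [e, map_sum, mul_sum]
  refine sum_congr rfl fun j hj => ?_
  rw [LS_monomial]
  ring

private lemma diamond (S : ℕ → ℝ) (k m : ℕ) :
    ∑ i ∈ range (k+1), (k.choose i : ℝ) * S (m+i)
      = ∑ l ∈ range (m+1),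
          (-1:ℝ)^(m-l) * (m.choose l : ℝ) * ∑ j ∈ range (k+l+1), ((k+l).choose j : ℝ) * S j := by
  have hpoly : (∑ i ∈ range (k+1), (monomial (m+i) ((k.choose i : ℝ)) : ℝ[X]))
      = ∑ l ∈ range (m+1), (X+1)^(k+l) * C ((-1:ℝ)^(m-l) * (m.choose l : ℝ)) := by
    have h1 : (∑ i ∈ range (k+1), (monomial (m+i) ((k.choose i : ℝ)) : ℝ[X]))
        = (X+1)^k * X^m := by
      rw [add_pow, sum_mul]
      refine sum_congr rfl fun i hi => ?_
      rw [one_pow, mul_one, ← C_eq_natCast, mul_comm (X ^ i) (C ((k.choose i : ℝ))),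
        mul_assoc, ← pow_add, Nat.add_comm i m, C_mul_X_pow_eq_monomial]
    have h2 : ((X : ℝ[X])+1)^k * X^m
        = ∑ l ∈ range (m+1), (X+1)^(k+l) * C ((-1:ℝ)^(m-l) * (m.choose l : ℝ)) := by
      have hm2 := add_pow ((X : ℝ[X]) + 1) (-1) m
      rw [show ((X : ℝ[X])+1)^k * X^m = (X+1)^k * ((X+1) + (-1))^m by ring, hm2, mul_sum]
      refine sum_congr rfl fun l hl => ?_
      rw [C_mul, ← C_eq_natCast, pow_add]
      have : C ((-1:ℝ)^(m-l)) = ((-1 : ℝ[X]))^(m-l) := by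
        rw [map_pow, map_neg, map_one]
      rw [this]
      ring
    rw [h1, h2]
  have := congrArg (LS S) hpoly
  rw [map_sum, map_sum] at this
  calc ∑ i ∈ range (k+1), (k.choose i : ℝ) * S (m+i)
      = ∑ i ∈ range (k+1), LS S (monomial (m+i) ((k.choose i : ℝ))) := by
        refine sum_congr rfl fun i hi => ?_
        rw [LS_monomial]
    _ = ∑ l ∈ range (m+1), LS S ((X+1)^(k+l) * C ((-1:ℝ)^(m-l) * (m.choose l : ℝ))) := this
    _ = _ := by
        refine sum_congr rfl fun l hl => ?_
        rw [LS_pow_mul]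

theorem stmt_11 (q : ℝ) (hq0 : q ≠ 0) (hq1 : q ≠ -1)
    (E : ℕ → ℝ) (hE0 : E 0 = 1)
    (hE : ∀ n : ℕ, 1 ≤ n →
      q * ∑ j ∈ range (n + 1), (n.choose j : ℝ) * E j + E n = 0)
    (B : ℕ → ℝ)
    (k m : ℕ) (hk : 1 ≤ k) (hm : 1 ≤ m) :
    (1 + q) * ∑ l ∈ range (m + 1), (m.choose l : ℝ) * (-1 : ℝ) ^ (m - l) * B (l + k)
    = ∑ j ∈ range (max k m + 1),
        (q * (k.choose j : ℝ) + (-1 : ℝ) ^ j * (m.choose j : ℝ)) *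
          ∑ l ∈ range (k + m - j + 1),
            ((k + m - j).choose l : ℝ) * E (k + m - j - l) * B l := by
  have hrel : ∀ s : ℕ, q * ∑ l ∈ range (s+1), (s.choose l : ℝ) * E l + E s
      = if s = 0 then 1 + q else 0 := by
    intro s
    rcases Nat.eq_zero_or_pos s with hs | hs
    · subst hs
      simp [hE0]
      ring
    · rw [if_neg (by omega)]
      exact hE s hs
  -- rewrite inner sums as Sfun
  have hinner : ∀ j, (∑ l ∈ range (k + m - j + 1),
      ((k + m - j).choose l : ℝ) * E (k + m - j - l) * B l) = Sfun E B (k + m - j) := by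
    intro j
    rw [Sfun_reflect]
  simp only [hinner]
  -- split RHS
  have hsplit : ∑ j ∈ range (max k m + 1),
      (q * (k.choose j : ℝ) + (-1 : ℝ) ^ j * (m.choose j : ℝ)) * Sfun E B (k + m - j)
    = q * (∑ j ∈ range (max k m + 1), (k.choose j : ℝ) * Sfun E B (k + m - j))
      + ∑ j ∈ range (max k m + 1), (-1 : ℝ) ^ j * (m.choose j : ℝ) * Sfun E B (k + m - j) := by
    rw [mul_sum, ← sum_add_distrib]
    refine sum_congr rfl fun j hj => by ring
  rw [hsplit]
  -- truncate and reflect q-part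
  have hq1' : ∑ j ∈ range (max k m + 1), (k.choose j : ℝ) * Sfun E B (k + m - j)
      = ∑ i ∈ range (k + 1), (k.choose i : ℝ) * Sfun E B (m + i) := by
    rw [← Finset.sum_subset (Finset.range_subset_range.2 (by omega : k + 1 ≤ max k m + 1))
      (fun j hj hj' => by
        rw [mem_range] at hj hj'
        have : k < j := by omega
        rw [Nat.choose_eq_zero_of_lt this]
        simp)]
    rw [← Finset.sum_range_reflect (fun i => (k.choose i : ℝ) * Sfun E B (m + i)) (k+1)]
    refine sum_congr rfl fun j hj => ?_
    rw [mem_range] at hj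
    have e1 : k + 1 - 1 - j = k - j := by omega
    have e2 : m + (k - j) = k + m - j := by omega
    rw [e1, e2, Nat.choose_symm (by omega)]
  -- truncate and reflect alternating part
  have halt : ∑ j ∈ range (max k m + 1), (-1 : ℝ) ^ j * (m.choose j : ℝ) * Sfun E B (k + m - j)
      = ∑ l ∈ range (m + 1), (-1 : ℝ) ^ (m - l) * (m.choose l : ℝ) * Sfun E B (k + l) := by
    rw [← Finset.sum_subset (Finset.range_subset_range.2 (by omega : m + 1 ≤ max k m + 1))
      (fun j hj hj' => by
        rw [mem_range] at hj hj'
        have : m < j := by omega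
        rw [Nat.choose_eq_zero_of_lt this]
        simp)]
    rw [← Finset.sum_range_reflect
      (fun l => (-1 : ℝ) ^ (m - l) * (m.choose l : ℝ) * Sfun E B (k + l)) (m+1)]
    refine sum_congr rfl fun j hj => ?_
    rw [mem_range] at hj
    have e1 : m + 1 - 1 - j = m - j := by omega
    have e2 : m - (m - j) = j := by omega
    have e3 : k + (m - j) = k + m - j := by omega
    rw [e1, e2, e3, Nat.choose_symm (by omega)]
  rw [hq1', halt, diamond (Sfun E B) k m]
  have hfinal : ∀ l ∈ range (m + 1),
      q * ((-1:ℝ)^(m-l) * (m.choose l : ℝ) * ∑ j ∈ range (k+l+1), ((k+l).choose j : ℝ) * Sfun E B j)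
        + (-1 : ℝ) ^ (m - l) * (m.choose l : ℝ) * Sfun E B (k + l)
      = (-1:ℝ)^(m-l) * (m.choose l : ℝ) * ((1 + q) * B (k + l)) := by
    intro l hl
    rw [← K2 q E B hrel (k + l)]
    ring
  have hcomb : q * (∑ l ∈ range (m+1),
        (-1:ℝ)^(m-l) * (m.choose l : ℝ) * ∑ j ∈ range (k+l+1), ((k+l).choose j : ℝ) * Sfun E B j)
      + ∑ l ∈ range (m+1), (-1:ℝ)^(m-l) * (m.choose l : ℝ) * Sfun E B (k+l)
      = ∑ l ∈ range (m+1), (-1:ℝ)^(m-l) * (m.choose l : ℝ) * ((1 + q) * B (k + l)) := by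
    rw [Finset.mul_sum, ← sum_add_distrib]
    exact sum_congr rfl hfinal
  rw [hcomb, Finset.mul_sum]
  refine sum_congr rfl fun l hl => ?_
  rw [Nat.add_comm l k]
  ring
end
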